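/- arXiv:1906.09389 — 10 statements merged into one kernel-verified Lean document; each statement's English description precedes it below -/
import Mathlib

section
/- Let κ ∈ (-1,1) and α ∈ (-π/2, π/2). Set T(z) = (1 - e^{iα} z)/(1 + κ e^{iα} z) and z* = 2cos(α)/(1-κ). Then the denominator 1 + κ e^{iα} z* is nonzero and T(z*) = -e^{2i𝔰_κ(α)}, i.e. T(z*) = exp(i(π + 2 arctan(((1-κ)/(1+κ)) tan α))). -/
open Real Complex

set_option maxHeartbeats 1000000 in
/-- For `κ ∈ (-1,1)` and `α ∈ (-π/2,π/2)`, with `T(z) = (1 - e^{iα}z)/(1 + κ e^{iα}z)` and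
`z* = 2cos(α)/(1-κ)`, the denominator `1 + κ e^{iα} z*` is nonzero and
`T(z*) = exp(i(π + 2 arctan(((1-κ)/(1+κ)) tan α)))`, i.e. `T(z*) = -e^{2i𝔰_κ(α)}`. -/
theorem geodesic_exit_point (κ : ℝ) (hκ : κ ∈ Set.Ioo (-1 : ℝ) 1)
    (α : ℝ) (hα : α ∈ Set.Ioo (-(π / 2)) (π / 2)) :
    1 + (κ : ℂ) * Complex.exp (Complex.I * α) * ((2 * Real.cos α / (1 - κ) : ℝ) : ℂ) ≠ 0 ∧
    (1 - Complex.exp (Complex.I * α) * ((2 * Real.cos α / (1 - κ) : ℝ) : ℂ)) /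
        (1 + κ * Complex.exp (Complex.I * α) * ((2 * Real.cos α / (1 - κ) : ℝ) : ℂ)) =
      Complex.exp (Complex.I *
        ((π + 2 * Real.arctan ((1 - κ) / (1 + κ) * Real.tan α) : ℝ) : ℂ)) := by
  obtain ⟨hκ1, hκ2⟩ := hκ
  obtain ⟨hα1, hα2⟩ := hα
  have hc : Real.cos α > 0 := Real.cos_pos_of_mem_Ioo ⟨hα1, hα2⟩
  have hcne : Real.cos α ≠ 0 := ne_of_gt hc
  have h1κ : (1:ℝ) - κ > 0 := by linarith
  have h1κ' : (1:ℝ) + κ > 0 := by linarith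
  set c := Real.cos α with hc'
  set s := Real.sin α with hs'
  set t := (1 - κ) / (1 + κ) * Real.tan α with ht
  set w := 2 * c / (1 - κ) with hw
  have htan : Real.tan α = s / c := Real.tan_eq_sin_div_cos α
  have hs2 : s ^ 2 = 1 - c ^ 2 := by nlinarith [Real.sin_sq_add_cos_sq α]
  have h1t : (0:ℝ) < 1 + t ^ 2 := by positivity
  have hcos2 : Real.cos (2 * Real.arctan t) = (1 - t ^ 2) / (1 + t ^ 2) := by
    rw [Real.cos_two_mul, Real.cos_arctan]
    rw [div_pow, one_pow, Real.sq_sqrt (by positivity : (0:ℝ) ≤ 1 + t ^ 2)]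
    field_simp
    ring
  have hsin2 : Real.sin (2 * Real.arctan t) = 2 * t / (1 + t ^ 2) := by
    rw [Real.sin_two_mul, Real.sin_arctan, Real.cos_arctan]
    have hss : Real.sqrt (1 + t ^ 2) * Real.sqrt (1 + t ^ 2) = 1 + t ^ 2 :=
      Real.mul_self_sqrt (le_of_lt h1t)
    have hsne : Real.sqrt (1 + t ^ 2) ≠ 0 := by positivity
    field_simp
    rw [Real.sq_sqrt (le_of_lt h1t)]
  have hexp : Complex.exp (Complex.I * α) = (c : ℂ) + (s : ℂ) * Complex.I := by
    rw [mul_comm, Complex.exp_mul_I]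
    push_cast [hc', hs']
    ring
  have hRHS : Complex.exp (Complex.I * ((π + 2 * Real.arctan t : ℝ) : ℂ)) =
      -(((1 - t ^ 2) / (1 + t ^ 2) : ℝ) : ℂ) - (((2 * t / (1 + t ^ 2)) : ℝ) : ℂ) * Complex.I := by
    have h2a : Complex.I * ((π + 2 * Real.arctan t : ℝ) : ℂ)
        = (π : ℂ) * Complex.I + ((2 * Real.arctan t : ℝ) : ℂ) * Complex.I := by
      push_cast; ring
    rw [h2a, Complex.exp_add, Complex.exp_pi_mul_I, Complex.exp_mul_I,
      ← Complex.ofReal_cos, ← Complex.ofReal_sin, hcos2, hsin2]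
    push_cast
    ring
  have hD : 1 + (κ : ℂ) * Complex.exp (Complex.I * α) * ((w : ℝ) : ℂ) ≠ 0 := by
    rw [hexp]
    intro h
    have h1 := congrArg Complex.re h
    simp [Complex.add_re, Complex.mul_re, Complex.mul_im] at h1
    have hwpos : 1 + κ * c * w > 0 := by
      rw [hw]
      rw [gt_iff_lt, ← sub_pos] at *
      have key : (0:ℝ) < 1 - κ + 2 * κ * c ^ 2 := by nlinarith [hs2, sq_nonneg s, mul_pos hc hc]
      have : 1 + κ * c * (2 * c / (1 - κ)) - 0 = (1 - κ + 2 * κ * c ^ 2) / (1 - κ) := by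
        field_simp; ring
      rw [this]
      positivity
    nlinarith [h1, hwpos]
  refine ⟨hD, ?_⟩
  rw [div_eq_iff hD, hexp, hRHS]
  have hcC : (c:ℂ) ≠ 0 := Complex.ofReal_ne_zero.mpr hcne
  have h1κC : (1:ℂ) - (κ:ℂ) ≠ 0 := by
    have := Complex.ofReal_ne_zero.mpr (ne_of_gt h1κ)
    push_cast at this
    exact this
  have h1κC' : (1:ℂ) + (κ:ℂ) ≠ 0 := by
    have := Complex.ofReal_ne_zero.mpr (ne_of_gt h1κ')
    push_cast at this
    exact this
  have h1tC : (1:ℂ) + (t:ℂ) ^ 2 ≠ 0 := by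
    have he : (1:ℂ) + (t:ℂ) ^ 2 = ((1 + t ^ 2 : ℝ) : ℂ) := by push_cast; ring
    rw [he]
    exact Complex.ofReal_ne_zero.mpr (ne_of_gt h1t)
  have hwC : ((w:ℝ):ℂ) = 2 * (c:ℂ) / (1 - (κ:ℂ)) := by
    rw [hw]; push_cast; ring
  have htC : ((t:ℝ):ℂ) = (1 - (κ:ℂ)) * (s:ℂ) / ((1 + (κ:ℂ)) * (c:ℂ)) := by
    rw [ht, htan]; push_cast; field_simp
  have hs2C : (s:ℂ) ^ 2 = 1 - (c:ℂ) ^ 2 := by exact_mod_cast congrArg (Complex.ofReal) hs2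
  have hQR : (0:ℝ) < ((1 + κ) * c) ^ 2 + ((1 - κ) * s) ^ 2 := by
    have h1 : (0:ℝ) < (1 + κ) * c := mul_pos h1κ' hc
    positivity
  have hQ : (((1 + (κ:ℂ)) * (c:ℂ)) ^ 2 + ((1 - (κ:ℂ)) * (s:ℂ)) ^ 2) ≠ 0 := by
    have he : (((1 + (κ:ℂ)) * (c:ℂ)) ^ 2 + ((1 - (κ:ℂ)) * (s:ℂ)) ^ 2)
        = ((((1 + κ) * c) ^ 2 + ((1 - κ) * s) ^ 2 : ℝ) : ℂ) := by push_cast; ring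
    rw [he]
    exact_mod_cast ne_of_gt hQR
  push_cast
  rw [hwC, htC]
  field_simp [hQ, hcC, h1κC, h1κC']
  rw [eq_div_iff (by convert hQ using 1; ring)]
  linear_combination ((-2)*(c:ℂ)^2 + (-2)*(c:ℂ)^2*(κ:ℂ)^1 + (2)*(c:ℂ)^2*(κ:ℂ)^2 + (-2)*Complex.I^1*(s:ℂ)^1*(c:ℂ)^1 + (2)*Complex.I^1*(s:ℂ)^1*(c:ℂ)^1*(κ:ℂ)^1 + (2)*Complex.I^1*(s:ℂ)^1*(c:ℂ)^1*(κ:ℂ)^2 + (2)*(c:ℂ)^2*(κ:ℂ)^3 + (-2)*Complex.I^1*(s:ℂ)^1*(c:ℂ)^1*(κ:ℂ)^3) * hs2C + ((4)*(s:ℂ)^2*(c:ℂ)^2*(κ:ℂ)^1 + (-4)*(s:ℂ)^2*(c:ℂ)^2*(κ:ℂ)^3) * Complex.I_sq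
end

section
/- For every κ ∈ (-1,1) and every α ∈ (-π/2, π/2), one has e^{2i𝔰_κ(α)} = (e^{2iα} + κ)/(1 + κ e^{2iα}); in particular the denominator 1 + κ e^{2iα} is nonzero. -/
open Real Complex

/-- The scattering signature `𝔰_κ(α) = arctan(((1-κ)/(1+κ)) tan α)`. -/
noncomputable def scatSig (κ α : ℝ) : ℝ := Real.arctan ((1 - κ) / (1 + κ) * Real.tan α)

lemma one_sub_I_mul_ofReal_ne (x : ℝ) : (1:ℂ) - Complex.I * (x : ℂ) ≠ 0 := by
  intro h
  have h2 := congrArg Complex.re h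
  simp only [Complex.sub_re, Complex.one_re, Complex.mul_re, Complex.I_re, Complex.I_im,
    Complex.ofReal_re, Complex.ofReal_im, Complex.zero_re] at h2
  norm_num at h2

lemma exp_two_mul_I_eq (θ : ℝ) (hc : Real.cos θ ≠ 0) :
    Complex.exp (2 * Complex.I * θ) =
      (1 + Complex.I * (Real.tan θ : ℂ)) / (1 - Complex.I * (Real.tan θ : ℂ)) := by
  have hne : (1 : ℂ) - Complex.I * (Real.tan θ : ℂ) ≠ 0 := one_sub_I_mul_ofReal_ne _
  have pyth : (Real.cos θ : ℂ)^2 + (Real.sin θ : ℂ)^2 = 1 := by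
    exact_mod_cast congrArg (fun x : ℝ => (x : ℂ)) (Real.cos_sq_add_sin_sq θ)
  have hc' : (Real.cos θ : ℂ) ≠ 0 := by exact_mod_cast hc
  rw [show (2 : ℂ) * Complex.I * θ = θ * Complex.I + θ * Complex.I by ring,
      Complex.exp_add, Complex.exp_mul_I, ← Complex.ofReal_cos, ← Complex.ofReal_sin,
      eq_div_iff hne, Real.tan_eq_sin_div_cos, Complex.ofReal_div]
  set c : ℂ := (Real.cos θ : ℂ)
  set s : ℂ := (Real.sin θ : ℂ)
  field_simp
  linear_combination (c + s * Complex.I) * pyth - (c * s ^ 2 + s ^ 3 * Complex.I) * Complex.I_sq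

lemma den_ne (k t : ℂ) (ht : 1 - Complex.I * t ≠ 0)
    (hQ : 1 + k - (1 - k) * Complex.I * t ≠ 0) :
    (1:ℂ) + k * ((1 + Complex.I * t) / (1 - Complex.I * t)) ≠ 0 := by
  intro h
  apply hQ
  have := congrArg (· * (1 - Complex.I * t)) h
  field_simp at this
  linear_combination this

lemma mobius (k t : ℂ) (hk : 1 + k ≠ 0) (ht : 1 - Complex.I * t ≠ 0)
    (hQ : 1 + k - (1 - k) * Complex.I * t ≠ 0) :
    (1 + Complex.I * ((1 - k) / (1 + k) * t)) / (1 - Complex.I * ((1 - k) / (1 + k) * t)) =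
      ((1 + Complex.I * t) / (1 - Complex.I * t) + k) /
        (1 + k * ((1 + Complex.I * t) / (1 - Complex.I * t))) := by
  have h2 : (1:ℂ) - Complex.I * ((1 - k) / (1 + k) * t) ≠ 0 := by
    intro h
    apply hQ
    have := congrArg (· * (1 + k)) h
    rw [sub_mul, one_mul, zero_mul] at this
    field_simp at this
    linear_combination this
  have h4 : (1:ℂ) + k * ((1 + Complex.I * t) / (1 - Complex.I * t)) ≠ 0 := by
    intro h
    apply hQ
    have := congrArg (· * (1 - Complex.I * t)) h
    field_simp at this
    linear_combination this
  rw [div_eq_div_iff h2 h4]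
  field_simp
  ring

/-- For `κ ∈ (-1,1)` and `α ∈ (-π/2,π/2)`,
`e^{2i𝔰_κ(α)} = (e^{2iα} + κ)/(1 + κ e^{2iα})`, the denominator being nonzero. -/
theorem exp_two_I_scatSig (κ : ℝ) (hκ : κ ∈ Set.Ioo (-1 : ℝ) 1)
    (α : ℝ) (hα : α ∈ Set.Ioo (-(π / 2)) (π / 2)) :
    (1 + (κ : ℂ) * Complex.exp (2 * Complex.I * α)) ≠ 0 ∧
    Complex.exp (2 * Complex.I * (scatSig κ α : ℝ)) =
      (Complex.exp (2 * Complex.I * α) + κ) / (1 + κ * Complex.exp (2 * Complex.I * α)) := by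
  obtain ⟨hκ1, hκ2⟩ := hκ
  have hκpos : (0:ℝ) < 1 + κ := by linarith
  have hκc : ((1:ℂ) + κ) ≠ 0 := by
    exact_mod_cast (show ((1:ℝ) + κ) ≠ 0 from hκpos.ne')
  have hcα : Real.cos α ≠ 0 := (Real.cos_pos_of_mem_Ioo hα).ne'
  have hβmem : scatSig κ α ∈ Set.Ioo (-(π/2)) (π/2) :=
    ⟨Real.neg_pi_div_two_lt_arctan _, Real.arctan_lt_pi_div_two _⟩
  have hcβ : Real.cos (scatSig κ α) ≠ 0 := (Real.cos_pos_of_mem_Ioo hβmem).ne'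
  have htβ : Real.tan (scatSig κ α) = (1 - κ) / (1 + κ) * Real.tan α :=
    Real.tan_arctan _
  have ht : (1:ℂ) - Complex.I * (Real.tan α : ℂ) ≠ 0 := one_sub_I_mul_ofReal_ne _
  have hQ : (1:ℂ) + ↑κ - (1 - ↑κ) * Complex.I * (Real.tan α : ℂ) ≠ 0 := by
    intro h
    have h2 := congrArg Complex.re h
    simp only [Complex.add_re, Complex.sub_re, Complex.one_re, Complex.mul_re, Complex.mul_im,
      Complex.I_re, Complex.I_im, Complex.ofReal_re, Complex.ofReal_im, Complex.sub_im,
      Complex.one_im, Complex.zero_re] at h2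
    norm_num at h2
    linarith
  have hden : (1 + (κ : ℂ) * Complex.exp (2 * Complex.I * α)) ≠ 0 := by
    rw [exp_two_mul_I_eq α hcα]
    exact den_ne _ _ ht hQ
  refine ⟨hden, ?_⟩
  rw [exp_two_mul_I_eq _ hcβ, exp_two_mul_I_eq _ hcα, htβ,
    show (((1 - κ) / (1 + κ) * Real.tan α : ℝ) : ℂ)
        = (1 - (κ:ℂ)) / (1 + (κ:ℂ)) * (Real.tan α : ℂ) by push_cast; ring]
  exact mobius _ _ hκc ht hQ
end

section
/- Let κ ∈ (-1,1) with κ ≠ 0 and α ∈ (-π/2, π/2). Then the series Σ_{p=1}^∞ (-κ)^p e^{2ipα} converges absolutely and e^{2i𝔰_κ(α)} = κ + (κ - κ^{-1}) Σ_{p=1}^∞ (-κ)^p e^{2ipα}. -/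
open Real Complex

lemma scat_key (κ T t : ℝ) (hκ1 : -1 < κ) (ht : t = (1-κ)/(1+κ)*T) :
    (((1:ℂ)+(t:ℂ)*Complex.I)^2/(1+(t:ℂ)^2)) *
      (1 + κ*(((1:ℂ)+(T:ℂ)*Complex.I)^2/(1+(T:ℂ)^2)))
    = κ + ((1:ℂ)+(T:ℂ)*Complex.I)^2/(1+(T:ℂ)^2) := by
  subst ht
  have hκp : (0:ℝ) < 1+κ := by linarith
  have hκc : (1:ℂ) + κ ≠ 0 := by
    have := Complex.ofReal_ne_zero.2 hκp.ne'
    push_cast at this; exact this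
  have hT2 : (1:ℂ) + (T:ℂ)^2 ≠ 0 := by
    have := Complex.ofReal_ne_zero.2 (show (1+T^2:ℝ) ≠ 0 by positivity)
    push_cast at this; exact this
  have hnz : ((1:ℂ)+κ)^2 + ((1:ℂ)-κ)^2*(T:ℂ)^2 ≠ 0 := by
    have := Complex.ofReal_ne_zero.2 (show ((1+κ)^2+(1-κ)^2*T^2:ℝ) ≠ 0 by positivity)
    push_cast at this; convert this using 2 <;> ring
  push_cast
  have ht2 : (1:ℂ) + ((1-κ)/(1+κ)*T)^2
      = (((1:ℂ)+κ)^2 + ((1:ℂ)-κ)^2*(T:ℂ)^2)/((1:ℂ)+κ)^2 := by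
    field_simp
  rw [ht2]
  have hI2 : (Complex.I:ℂ)^2 = -1 := Complex.I_sq
  have hI3 : (Complex.I:ℂ)^3 = -Complex.I := by rw [pow_succ, hI2]; ring
  have hI4 : (Complex.I:ℂ)^4 = 1 := by rw [show 4 = 2*2 by rfl, pow_mul, hI2]; ring
  field_simp
  ring_nf
  simp only [hI2, hI3, hI4]
  ring

/-- For `κ ∈ (-1,1)`, `κ ≠ 0`, and `α ∈ (-π/2,π/2)`, the series
`Σ_{p=1}^∞ (-κ)^p e^{2ipα}` converges absolutely, and
`e^{2i𝔰_κ(α)} = κ + (κ - κ⁻¹) Σ_{p=1}^∞ (-κ)^p e^{2ipα}`. -/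
theorem geometric_series_scatSig (κ : ℝ) (hκ : κ ∈ Set.Ioo (-1 : ℝ) 1) (hκ0 : κ ≠ 0)
    (α : ℝ) (hα : α ∈ Set.Ioo (-(π / 2)) (π / 2)) :
    Summable (fun p : ℕ =>
      ‖((-κ : ℂ)) ^ (p + 1) * Complex.exp (2 * Complex.I * (p + 1) * α)‖) ∧
    Complex.exp (2 * Complex.I * (scatSig κ α : ℝ)) =
      κ + ((κ : ℂ) - (κ : ℂ)⁻¹) *
        ∑' p : ℕ, ((-κ : ℂ)) ^ (p + 1) * Complex.exp (2 * Complex.I * (p + 1) * α) := by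
  obtain ⟨hκ1, hκ2⟩ := hκ
  obtain ⟨hα1, hα2⟩ := hα
  set z : ℂ := Complex.exp (2 * Complex.I * α) with hz
  have hzabs : ‖z‖ = 1 := by
    rw [hz, Complex.norm_exp]
    simp
  have hexp : ∀ p : ℕ, Complex.exp (2 * Complex.I * (p + 1) * α) = z ^ (p + 1) := by
    intro p
    rw [hz, ← Complex.exp_nat_mul]
    congr 1
    push_cast
    ring
  have hξ : ‖-(κ:ℂ) * z‖ < 1 := by
    rw [norm_mul, hzabs, mul_one, norm_neg, Complex.norm_real, Real.norm_eq_abs]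
    rw [abs_lt]; constructor <;> linarith
  have hfun : ∀ p : ℕ, ((-κ : ℂ)) ^ (p + 1) * Complex.exp (2 * Complex.I * (p + 1) * α)
      = (-(κ:ℂ) * z) ^ (p + 1) := by
    intro p; rw [hexp p, mul_pow]
  constructor
  · apply Summable.congr (f := fun p : ℕ => ‖-(κ:ℂ)*z‖ ^ (p+1))
    · apply Summable.comp_injective (i := fun p : ℕ => p + 1)
        (summable_geometric_of_lt_one (by positivity) hξ)
      exact add_left_injective 1
    · intro p; rw [hfun p, norm_pow]
  · have hsum : (∑' p : ℕ, ((-κ : ℂ)) ^ (p + 1) * Complex.exp (2 * Complex.I * (p + 1) * α))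
        = (-(κ:ℂ)*z) * (1 - (-(κ:ℂ)*z))⁻¹ := by
      calc (∑' p : ℕ, ((-κ : ℂ)) ^ (p + 1) * Complex.exp (2 * Complex.I * (p + 1) * α))
          = ∑' p : ℕ, (-(κ:ℂ)*z) * (-(κ:ℂ)*z) ^ p := by
            congr 1; ext p; rw [hfun p, pow_succ']
        _ = (-(κ:ℂ)*z) * (1 - (-(κ:ℂ)*z))⁻¹ := by
            rw [tsum_mul_left, tsum_geometric_of_norm_lt_one (by simpa using hξ)]
    rw [hsum]
    -- denominators
    have hden : (1 : ℂ) - (-(κ:ℂ)*z) ≠ 0 := by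
      intro h
      have : ‖-(κ:ℂ)*z‖ = 1 := by
        have : (-(κ:ℂ)*z) = 1 := by linear_combination -h
        rw [this]; simp
      linarith [hξ, this.symm.le]
    -- trig setup
    set T := Real.tan α with hT
    set c := (1 - κ) / (1 + κ) with hc
    set t := c * T with ht
    have hκp : (0:ℝ) < 1 + κ := by linarith
    have hcosα : Real.cos α = 1 / Real.sqrt (1 + T^2) := by
      rw [hT, ← Real.cos_arctan, Real.arctan_tan hα1 hα2]
    have hsinα : Real.sin α = T / Real.sqrt (1 + T^2) := by
      conv_lhs => rw [← Real.arctan_tan hα1 hα2]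
      rw [Real.sin_arctan]
    have hs : scatSig κ α = Real.arctan t := rfl
    have hcoss : Real.cos (scatSig κ α) = 1 / Real.sqrt (1 + t^2) := by
      rw [hs, Real.cos_arctan]
    have hsins : Real.sin (scatSig κ α) = t / Real.sqrt (1 + t^2) := by
      rw [hs, Real.sin_arctan]
    set A := Real.sqrt (1 + T^2) with hA
    set B := Real.sqrt (1 + t^2) with hB
    have hA2 : (A:ℝ)^2 = 1 + T^2 := Real.sq_sqrt (by positivity)
    have hB2 : (B:ℝ)^2 = 1 + t^2 := Real.sq_sqrt (by positivity)
    have hA0 : A ≠ 0 := by rw [hA]; positivity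
    have hB0 : B ≠ 0 := by rw [hB]; positivity
    have hexp2 : ∀ x : ℝ, Complex.exp (2 * Complex.I * x)
        = ((Real.cos x : ℂ) + (Real.sin x : ℂ) * Complex.I)^2 := by
      intro x
      have h2 : 2 * Complex.I * (x:ℂ) = (x:ℂ)*Complex.I + (x:ℂ)*Complex.I := by ring
      rw [h2, Complex.exp_add, Complex.exp_mul_I, ← Complex.ofReal_cos, ← Complex.ofReal_sin]
      ring
    have hAc : ((A:ℝ):ℂ)^2 = 1+(T:ℂ)^2 := by
      rw [show ((A:ℝ):ℂ)^2 = ((A^2:ℝ):ℂ) by push_cast; ring, hA2]; push_cast; ring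
    have hBc : ((B:ℝ):ℂ)^2 = 1+(t:ℂ)^2 := by
      rw [show ((B:ℝ):ℂ)^2 = ((B^2:ℝ):ℂ) by push_cast; ring, hB2]; push_cast; ring
    have hzz : z = ((1:ℂ)+(T:ℂ)*Complex.I)^2/(1+(T:ℂ)^2) := by
      rw [hz, hexp2, hcosα, hsinα,
        show (((1/A:ℝ):ℂ) + ((T/A:ℝ):ℂ)*Complex.I) = ((1:ℂ)+(T:ℂ)*Complex.I)/A by
          push_cast; ring,
        div_pow, hAc]
    have hexps : Complex.exp (2 * Complex.I * (scatSig κ α : ℝ))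
        = ((1:ℂ)+(t:ℂ)*Complex.I)^2/(1+(t:ℂ)^2) := by
      rw [hexp2, hcoss, hsins,
        show (((1/B:ℝ):ℂ) + ((t/B:ℝ):ℂ)*Complex.I) = ((1:ℂ)+(t:ℂ)*Complex.I)/B by
          push_cast; ring,
        div_pow, hBc]
    have hXz : Complex.exp (2 * Complex.I * (scatSig κ α : ℝ)) * (1 + κ*z) = κ + z := by
      rw [hexps, hzz]
      exact scat_key κ T t hκ1 (by rw [ht, hc])
    have h1κz : (1:ℂ) + κ*z ≠ 0 := by
      intro h; apply hden; linear_combination h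
    have hκcz : (κ:ℂ) ≠ 0 := Complex.ofReal_ne_zero.2 hκ0
    have hX : Complex.exp (2 * Complex.I * (scatSig κ α : ℝ)) = (κ + z)/(1 + κ*z) := by
      rw [eq_div_iff h1κz]; exact hXz
    rw [hX, show (1:ℂ) - -↑κ*z = 1+↑κ*z by ring]
    field_simp
    ring
end

section
/- Let κ ∈ (-1,1), ρ ∈ [0,1), θ ∈ ℝ. Set S = -2(1+κ)ρcos(θ)/(1-κ²ρ²), P = (ρ²-1)/(1-κ²ρ²), and T(x) = (e^{iθ}x + ρ)/(1 - κe^{iθ}ρx). If x₊, x₋ ∈ ℂ satisfy x₊ + x₋ = S and x₊·x₋ = P, and the denominators 1 - κe^{iθ}ρx₊ and 1 - κe^{iθ}ρx₋ are nonzero, then T(x₊)·T(x₋) = -e^{2iθ}·(1 + κρ²e^{-2iθ})/(1 + κρ²e^{2iθ}). -/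
open Complex

/-- Let `κ ∈ (-1,1)`, `ρ ∈ [0,1)`, `θ ∈ ℝ`, and `T(x) = (e^{iθ}x + ρ)/(1 - κe^{iθ}ρx)`.
If `x₊ + x₋ = S = -2(1+κ)ρcos(θ)/(1-κ²ρ²)` and `x₊·x₋ = P = (ρ²-1)/(1-κ²ρ²)`, with both
denominators `1 - κe^{iθ}ρx₊` and `1 - κe^{iθ}ρx₋` nonzero, then
`T(x₊)·T(x₋) = -e^{2iθ}(1 + κρ²e^{-2iθ})/(1 + κρ²e^{2iθ})`. -/
theorem scattering_product (κ : ℝ) (hκ : κ ∈ Set.Ioo (-1 : ℝ) 1)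
    (ρ : ℝ) (hρ : ρ ∈ Set.Ico (0 : ℝ) 1) (θ : ℝ) (xp xm : ℂ)
    (hsum : xp + xm = ((-2 * (1 + κ) * ρ * Real.cos θ / (1 - κ ^ 2 * ρ ^ 2) : ℝ) : ℂ))
    (hprod : xp * xm = (((ρ ^ 2 - 1) / (1 - κ ^ 2 * ρ ^ 2) : ℝ) : ℂ))
    (hdp : 1 - (κ : ℂ) * Complex.exp (Complex.I * θ) * ρ * xp ≠ 0)
    (hdm : 1 - (κ : ℂ) * Complex.exp (Complex.I * θ) * ρ * xm ≠ 0) :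
    ((Complex.exp (Complex.I * θ) * xp + ρ) / (1 - κ * Complex.exp (Complex.I * θ) * ρ * xp)) *
      ((Complex.exp (Complex.I * θ) * xm + ρ) / (1 - κ * Complex.exp (Complex.I * θ) * ρ * xm)) =
      -Complex.exp (2 * Complex.I * θ) *
        (1 + κ * ρ ^ 2 * Complex.exp (-(2 * Complex.I * θ))) /
        (1 + κ * ρ ^ 2 * Complex.exp (2 * Complex.I * θ)) := by
  obtain ⟨hκ1, hκ2⟩ := hκ
  obtain ⟨hρ0, hρ1⟩ := hρ
  set e : ℂ := Complex.exp (Complex.I * θ) with he_def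
  have he : e ≠ 0 := Complex.exp_ne_zero _
  have habs : ‖e‖ = 1 := by
    rw [he_def, mul_comm]
    exact Complex.norm_exp_ofReal_mul_I θ
  have hκρ : |κ| * ρ ^ 2 < 1 := by
    have h1 : |κ| < 1 := abs_lt.mpr ⟨hκ1, hκ2⟩
    have h2 : ρ ^ 2 ≤ 1 := by nlinarith
    nlinarith [abs_nonneg κ]
  have hDr : (1 - κ ^ 2 * ρ ^ 2 : ℝ) ≠ 0 := by
    have h3 : κ ^ 2 ≤ |κ| := by
      rcases le_or_gt 1 (|κ|) with h | h
      · nlinarith [abs_lt.mpr ⟨hκ1, hκ2⟩]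
      · nlinarith [abs_nonneg κ, _root_.sq_abs κ]
    nlinarith [sq_nonneg ρ]
  have hD : ((1 - κ ^ 2 * ρ ^ 2 : ℝ) : ℂ) ≠ 0 := by exact_mod_cast hDr
  have h2e : Complex.exp (2 * Complex.I * θ) = e * e := by
    rw [he_def, ← Complex.exp_add]; ring_nf
  have hne : Complex.exp (-(2 * Complex.I * θ)) = (e * e)⁻¹ := by
    rw [Complex.exp_neg, h2e]
  have hR : (1 : ℂ) + κ * ρ ^ 2 * (e * e) ≠ 0 := by
    intro h
    have h' : (κ : ℂ) * (ρ : ℂ) ^ 2 * (e * e) = -1 := by linear_combination h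
    have h2 : ‖((κ : ℂ) * (ρ : ℂ) ^ 2 * (e * e))‖ = |κ| * ρ ^ 2 := by
      rw [norm_mul, norm_mul, norm_mul, norm_pow, Complex.norm_real, Complex.norm_real,
        habs, Real.norm_eq_abs, Real.norm_eq_abs, _root_.abs_of_nonneg hρ0]
      ring
    rw [h'] at h2
    simp at h2
    nlinarith
  have h2e0 : (2 : ℂ) * e ≠ 0 := by simpa using he
  have hinv : Complex.exp (-((θ : ℂ) * Complex.I)) * e = 1 := by
    rw [he_def, ← Complex.exp_add, show -((θ : ℂ) * Complex.I) + Complex.I * θ = 0 by ring,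
      Complex.exp_zero]
  have heq : Complex.exp ((θ : ℂ) * Complex.I) = e := by
    rw [he_def, mul_comm]
  have hcos : Complex.cos (θ : ℂ) = (e * e + 1) / (2 * e) := by
    rw [Complex.cos, eq_div_iff h2e0, neg_mul]
    linear_combination e * heq + hinv
  have hn : (e * xp + (ρ : ℂ)) * (e * xm + (ρ : ℂ))
      = e * e * (xp * xm) + e * ρ * (xp + xm) + (ρ : ℂ) ^ 2 := by ring
  have hd : (1 - (κ : ℂ) * e * ρ * xp) * (1 - (κ : ℂ) * e * ρ * xm)
      = 1 - κ * e * ρ * (xp + xm) + (κ : ℂ) ^ 2 * (e * e) * ρ ^ 2 * (xp * xm) := by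
    ring
  rw [hsum, hprod] at hd
  have hden : (1 : ℂ) - κ * e * ρ * ((-2 * (1 + κ) * ρ * Real.cos θ / (1 - κ ^ 2 * ρ ^ 2) : ℝ) : ℂ)
      + (κ : ℂ) ^ 2 * (e * e) * ρ ^ 2 * (((ρ ^ 2 - 1) / (1 - κ ^ 2 * ρ ^ 2) : ℝ) : ℂ) ≠ 0 := by
    rw [← hd]; exact mul_ne_zero hdp hdm
  rw [div_mul_div_comm, hn, hd, hsum, hprod, h2e, hne]
  rw [div_eq_div_iff hden hR]
  push_cast
  rw [hcos]
  have hDc : (1 : ℂ) - (κ : ℂ) ^ 2 * (ρ : ℂ) ^ 2 ≠ 0 := by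
    intro h
    apply hDr
    exact_mod_cast h
  have hDc' : (1 : ℂ) - (ρ : ℂ) ^ 2 * (κ : ℂ) ^ 2 ≠ 0 := by rwa [mul_comm] at hDc
  field_simp
  ring
end

section
/- For every κ ∈ (-1,1) and α ∈ (-π/2, π/2), the complex number (1/√(1-κ²))·e^{iα}·(e^{-i𝔰_κ(α)} - κe^{i𝔰_κ(α)}) is real and positive, and it equals √(𝔰_κ'(α)), where 𝔰_κ'(α) = (1-κ²)/(1 + κ² + 2κ cos(2α)). -/
open Real Complex

/-- The derivative `𝔰_κ'(α) = (1-κ²)/(1 + κ² + 2κ cos(2α))`. -/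
noncomputable def scatSig' (κ α : ℝ) : ℝ := (1 - κ ^ 2) / (1 + κ ^ 2 + 2 * κ * Real.cos (2 * α))

/-- For `κ ∈ (-1,1)` and `α ∈ (-π/2,π/2)`, the complex number
`(1/√(1-κ²)) e^{iα} (e^{-i𝔰_κ(α)} - κ e^{i𝔰_κ(α)})` is real, positive, and equals `√(𝔰_κ'(α))`. -/
theorem sqrt_scatSig'_formula (κ : ℝ) (hκ : κ ∈ Set.Ioo (-1 : ℝ) 1)
    (α : ℝ) (hα : α ∈ Set.Ioo (-(π / 2)) (π / 2)) :
    ((1 / Real.sqrt (1 - κ ^ 2) : ℝ) * Complex.exp (Complex.I * α) *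
        (Complex.exp (-Complex.I * (scatSig κ α : ℝ)) -
          κ * Complex.exp (Complex.I * (scatSig κ α : ℝ)))).im = 0 ∧
    0 < ((1 / Real.sqrt (1 - κ ^ 2) : ℝ) * Complex.exp (Complex.I * α) *
        (Complex.exp (-Complex.I * (scatSig κ α : ℝ)) -
          κ * Complex.exp (Complex.I * (scatSig κ α : ℝ)))).re ∧
    (1 / Real.sqrt (1 - κ ^ 2) : ℝ) * Complex.exp (Complex.I * α) *
        (Complex.exp (-Complex.I * (scatSig κ α : ℝ)) -
          κ * Complex.exp (Complex.I * (scatSig κ α : ℝ))) =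
      (Real.sqrt (scatSig' κ α) : ℂ) := by
  obtain ⟨hκ1, hκ2⟩ := hκ
  obtain ⟨hα1, hα2⟩ := hα
  have h1κ : (0:ℝ) < 1 + κ := by linarith
  have h1κ' : (0:ℝ) < 1 - κ := by linarith
  have hκsq : (0:ℝ) < 1 - κ ^ 2 := by nlinarith
  have hcα : 0 < Real.cos α := Real.cos_pos_of_mem_Ioo ⟨hα1, hα2⟩
  set x : ℝ := (1 - κ) / (1 + κ) * Real.tan α with hx
  have hβ : scatSig κ α = Real.arctan x := rfl
  have htan : Real.tan (scatSig κ α) = x := by rw [hβ, Real.tan_arctan]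
  have hcβ : 0 < Real.cos (scatSig κ α) := by
    rw [hβ]; exact Real.cos_arctan_pos x
  have hsβ : Real.sin (scatSig κ α) = x * Real.cos (scatSig κ α) := by
    rw [← htan, Real.tan_eq_sin_div_cos]; field_simp
  have hsα : Real.sin α = Real.tan α * Real.cos α := by
    rw [Real.tan_eq_sin_div_cos]; field_simp
  have hpyth : Real.sin α ^ 2 + Real.cos α ^ 2 = 1 := Real.sin_sq_add_cos_sq α
  have htα : Real.tan α ^ 2 * Real.cos α ^ 2 = 1 - Real.cos α ^ 2 := by
    rw [← hpyth]; rw [hsα] at hpyth ⊢; ring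
  have hw : 0 < Real.sqrt (1 - κ ^ 2) := Real.sqrt_pos.mpr hκsq
  have hwsq : Real.sqrt (1 - κ ^ 2) ^ 2 = 1 - κ ^ 2 := Real.sq_sqrt hκsq.le
  set r : ℝ := (1 - κ) * Real.cos (scatSig κ α) / (Real.cos α * Real.sqrt (1 - κ ^ 2))
    with hr
  have hrpos : 0 < r := by positivity
  -- rewrite the exponentials
  have e1 : Complex.exp (Complex.I * (α:ℝ)) =
      (Real.cos α : ℂ) + (Real.sin α : ℂ) * Complex.I := by
    rw [mul_comm, Complex.exp_mul_I, Complex.ofReal_cos, Complex.ofReal_sin]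
  have e2 : Complex.exp (-Complex.I * (scatSig κ α : ℝ)) =
      (Real.cos (scatSig κ α) : ℂ) - (Real.sin (scatSig κ α) : ℂ) * Complex.I := by
    have : -Complex.I * (scatSig κ α : ℝ) = ((-(scatSig κ α) : ℝ) : ℂ) * Complex.I := by
      push_cast; ring
    rw [this, Complex.exp_mul_I, ← Complex.ofReal_cos, ← Complex.ofReal_sin,
      Real.cos_neg, Real.sin_neg]
    push_cast; ring
  have e3 : Complex.exp (Complex.I * (scatSig κ α : ℝ)) =
      (Real.cos (scatSig κ α) : ℂ) + (Real.sin (scatSig κ α) : ℂ) * Complex.I := by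
    rw [mul_comm, Complex.exp_mul_I, Complex.ofReal_cos, Complex.ofReal_sin]
  -- the complex number equals the real number r
  have hz : (1 / Real.sqrt (1 - κ ^ 2) : ℝ) * Complex.exp (Complex.I * α) *
        (Complex.exp (-Complex.I * (scatSig κ α : ℝ)) -
          κ * Complex.exp (Complex.I * (scatSig κ α : ℝ))) = (r : ℂ) := by
    rw [e1, e2, e3, Complex.ext_iff]
    simp only [Complex.mul_re, Complex.mul_im, Complex.sub_re, Complex.sub_im,
      Complex.add_re, Complex.add_im, Complex.ofReal_re, Complex.ofReal_im,
      Complex.I_re, Complex.I_im]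
    constructor
    · rw [hr, hsβ, hsα, hx]; field_simp
      linear_combination (Real.cos (scatSig κ α) * (1 - κ ^ 2)) * htα
    · rw [hsβ, hsα, hx]; field_simp; ring
  have hr2 : r ^ 2 = scatSig' κ α := by
    have hcβ2 : Real.cos (scatSig κ α) ^ 2 = 1 / (1 + x ^ 2) := by
      rw [hβ, Real.cos_arctan]
      rw [div_pow, one_pow, Real.sq_sqrt (by positivity)]
    have hc2α : Real.cos (2 * α) = 2 * Real.cos α ^ 2 - 1 := Real.cos_two_mul α
    have hden : 0 < 1 + κ ^ 2 + 2 * κ * Real.cos (2 * α) := by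
      nlinarith [mul_nonneg (sq_nonneg (1 + κ))
          (by linarith [Real.neg_one_le_cos (2 * α)] : (0:ℝ) ≤ 1 + Real.cos (2 * α)),
        mul_nonneg (sq_nonneg (1 - κ))
          (by linarith [Real.cos_le_one (2 * α)] : (0:ℝ) ≤ 1 - Real.cos (2 * α)), hκsq]
    rw [hr, scatSig', div_pow, mul_pow, mul_pow, hwsq, hcβ2, hc2α, hx]
    have hden' : 1 + κ ^ 2 + 2 * κ * (2 * Real.cos α ^ 2 - 1) ≠ 0 := by
      rw [← hc2α]; exact hden.ne'
    field_simp
    rw [eq_div_iff (by convert hden' using 2; ring)]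
    linear_combination (-(1 - κ ^ 2) ^ 2 * (1 - κ) ^ 2) * htα
  rw [hz]
  refine ⟨by simp, by simpa using hrpos, ?_⟩
  rw [← hr2, Real.sqrt_sq hrpos.le]
end

section
/- For every κ ∈ (-1,1) and α ∈ (-π/2, π/2), one has √((1+κ)/(1-κ))·√(𝔰_κ'(α))·cos(α) = cos(𝔰_κ(α)) and √((1-κ)/(1+κ))·√(𝔰_κ'(α))·sin(α) = sin(𝔰_κ(α)), where 𝔰_κ'(α) = (1-κ²)/(1 + κ² + 2κ cos(2α)). -/
open Real

/-- For `κ ∈ (-1,1)` and `α ∈ (-π/2,π/2)`: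
`√((1+κ)/(1-κ)) √(𝔰_κ'(α)) cos α = cos(𝔰_κ(α))` and
`√((1-κ)/(1+κ)) √(𝔰_κ'(α)) sin α = sin(𝔰_κ(α))`. -/
theorem cos_sin_scatSig (κ : ℝ) (hκ : κ ∈ Set.Ioo (-1 : ℝ) 1)
    (α : ℝ) (hα : α ∈ Set.Ioo (-(π / 2)) (π / 2)) :
    Real.sqrt ((1 + κ) / (1 - κ)) * Real.sqrt (scatSig' κ α) * Real.cos α =
      Real.cos (scatSig κ α) ∧
    Real.sqrt ((1 - κ) / (1 + κ)) * Real.sqrt (scatSig' κ α) * Real.sin α =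
      Real.sin (scatSig κ α) := by
  obtain ⟨hκ1, hκ2⟩ := hκ
  obtain ⟨hα1, hα2⟩ := hα
  have hc : 0 < Real.cos α := Real.cos_pos_of_mem_Ioo ⟨hα1, hα2⟩
  have h1 : (0:ℝ) < 1 + κ := by linarith
  have h2 : (0:ℝ) < 1 - κ := by linarith
  set D : ℝ := (1 + κ)^2 * Real.cos α ^ 2 + (1 - κ)^2 * Real.sin α ^ 2 with hDdef
  have hD : 1 + κ ^ 2 + 2 * κ * Real.cos (2 * α) = D := by
    rw [Real.cos_two_mul, hDdef]
    nlinarith [Real.sin_sq_add_cos_sq α]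
  have hDpos : 0 < D :=
    add_pos_of_pos_of_nonneg (by positivity) (by positivity)
  set x : ℝ := (1 - κ) / (1 + κ) * Real.tan α with hxdef
  have hx : 1 + x ^ 2 = D / ((1 + κ)^2 * Real.cos α ^ 2) := by
    rw [hxdef, Real.tan_eq_sin_div_cos, hDdef]
    field_simp
  have hsq : Real.sqrt (1 + x ^ 2) = Real.sqrt D / ((1 + κ) * Real.cos α) := by
    rw [hx, Real.sqrt_div hDpos.le, show (1 + κ)^2 * Real.cos α ^ 2 = ((1 + κ) * Real.cos α)^2 by ring,
      Real.sqrt_sq (by positivity)]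
  have hsD : 0 < Real.sqrt D := Real.sqrt_pos.mpr hDpos
  have hS' : scatSig' κ α = (1 - κ ^ 2) / D := by rw [scatSig', hD]
  constructor
  · have hcomb : Real.sqrt ((1 + κ) / (1 - κ)) * Real.sqrt (scatSig' κ α)
        = (1 + κ) / Real.sqrt D := by
      rw [hS', ← Real.sqrt_mul (by positivity),
        show (1 + κ) / (1 - κ) * ((1 - κ ^ 2) / D) = (1 + κ)^2 / D by field_simp; ring,
        Real.sqrt_div (by positivity), Real.sqrt_sq h1.le]
    rw [hcomb, scatSig, Real.cos_arctan, ← hxdef, hsq]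
    field_simp
  · have hcomb : Real.sqrt ((1 - κ) / (1 + κ)) * Real.sqrt (scatSig' κ α)
        = (1 - κ) / Real.sqrt D := by
      rw [hS', ← Real.sqrt_mul (by positivity),
        show (1 - κ) / (1 + κ) * ((1 - κ ^ 2) / D) = (1 - κ)^2 / D by field_simp; ring,
        Real.sqrt_div (by positivity), Real.sqrt_sq h2.le]
    rw [hcomb, scatSig, Real.sin_arctan, ← hxdef, hsq, hxdef, Real.tan_eq_sin_div_cos]
    field_simp
end

section
/- Let κ ∈ (-1,1). For integers n ≥ 0 and k ∈ ℤ, define on [0,2π]×[-π/2,π/2] the function ψ^κ_{n,k}(β,α) = ((-1)^n/(4π))·√(𝔰_κ'(α))·e^{i(n-2k)(β+𝔰_κ(α))}·(e^{i(n+1)𝔰_κ(α)} + (-1)^n e^{-i(n+1)𝔰_κ(α)}), where 𝔰_κ(α) = arctan(((1-κ)/(1+κ)) tan α) and 𝔰_κ'(α) = (1-κ²)/(1+κ²+2κcos(2α)). Then for all integers n, n' ≥ 0 and k, k' ∈ ℤ, the weighted inner product (1/(1+κ))·∫₀^{2π}∫_{-π/2}^{π/2} ψ^κ_{n,k}(β,α)·conj(ψ^κ_{n',k'}(β,α))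 dα dβ equals 1/(4(1+κ)) if (n,k) = (n',k') and equals 0 otherwise. -/
open Real Complex intervalIntegral

noncomputable def gfun (κ α : ℝ) : ℝ :=
  α + Real.arctan (-κ * Real.sin (2 * α) / (1 + κ * Real.cos (2 * α)))

lemma gden_pos {κ : ℝ} (hκ : κ ∈ Set.Ioo (-1 : ℝ) 1) (α : ℝ) :
    0 < 1 + κ * Real.cos (2 * α) := by
  obtain ⟨h1, h2⟩ := hκ
  have hc1 := Real.neg_one_le_cos (2*α)
  have hc2 := Real.cos_le_one (2*α)
  rcases le_or_gt 0 κ with h | h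
  · nlinarith
  · nlinarith

lemma sden_pos {κ : ℝ} (hκ : κ ∈ Set.Ioo (-1 : ℝ) 1) (α : ℝ) :
    0 < 1 + κ ^ 2 + 2 * κ * Real.cos (2 * α) := by
  obtain ⟨h1, h2⟩ := hκ
  have hc1 := Real.neg_one_le_cos (2*α)
  have hc2 := Real.cos_le_one (2*α)
  rcases le_or_gt 0 κ with h | h
  · nlinarith [sq_nonneg (1-κ)]
  · nlinarith [sq_nonneg (1+κ)]

lemma scatSig'_pos {κ : ℝ} (hκ : κ ∈ Set.Ioo (-1 : ℝ) 1) (α : ℝ) :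
    0 < scatSig' κ α := by
  have := sden_pos hκ α
  obtain ⟨h1, h2⟩ := hκ
  exact div_pos (by nlinarith) this

lemma gfun_eq {κ : ℝ} (hκ : κ ∈ Set.Ioo (-1 : ℝ) 1) {α : ℝ}
    (hα : α ∈ Set.Ioo (-(π/2)) (π/2)) : gfun κ α = scatSig κ α := by
  have hden2 := gden_pos hκ α
  rw [Real.cos_two_mul] at hden2
  obtain ⟨h1, h2⟩ := hκ
  have hκ1 : (0:ℝ) < 1 + κ := by linarith
  have hc : 0 < (1 - κ) / (1 + κ) := div_pos (by linarith) hκ1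
  set c := (1 - κ) / (1 + κ) with hcdef
  have hcos : 0 < Real.cos α := Real.cos_pos_of_mem_Ioo hα
  set t := Real.tan α with ht
  have hprod : (c * t) * (-t) < 1 := by nlinarith [sq_nonneg t]
  have key := Real.arctan_add hprod
  rw [Real.arctan_neg, Real.arctan_tan hα.1 hα.2] at key
  have harg : (c * t + -t) / (1 - c * t * -t)
      = -κ * Real.sin (2 * α) / (1 + κ * Real.cos (2 * α)) := by
    have hs := Real.sin_sq_add_cos_sq α
    have hdl : (0:ℝ) < 1 - c * t * -t := by nlinarith [sq_nonneg t]
    have hdr := gden_pos ⟨h1, h2⟩ α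
    rw [div_eq_div_iff hdl.ne' hdr.ne']
    rw [Real.sin_two_mul, Real.cos_two_mul, ht, Real.tan_eq_sin_div_cos, hcdef]
    field_simp
    linear_combination (2*κ*Real.sin α*(1-κ)) * hs
  rw [harg] at key
  unfold gfun scatSig
  rw [← hcdef, ← ht, ← key]
  ring

lemma gfun_pi_div_two (κ : ℝ) : gfun κ (π/2) = π/2 := by
  unfold gfun
  rw [show 2 * (π/2) = π by ring, Real.sin_pi]
  simp

lemma gfun_neg_pi_div_two (κ : ℝ) : gfun κ (-(π/2)) = -(π/2) := by
  unfold gfun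
  rw [show 2 * (-(π/2)) = -π by ring, Real.sin_neg, Real.sin_pi]
  simp

lemma gfun_continuous {κ : ℝ} (hκ : κ ∈ Set.Ioo (-1 : ℝ) 1) : Continuous (gfun κ) := by
  apply continuous_id.add
  apply Real.continuous_arctan.comp
  exact (continuous_const.mul (Real.continuous_sin.comp (continuous_const.mul continuous_id))).div
    (continuous_const.add (continuous_const.mul
      (Real.continuous_cos.comp (continuous_const.mul continuous_id))))
    (fun α => (gden_pos hκ α).ne')

lemma scatSig'_continuous {κ : ℝ} (hκ : κ ∈ Set.Ioo (-1 : ℝ) 1) : Continuous (scatSig' κ) :=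
  continuous_const.div
    (continuous_const.add (continuous_const.mul
      (Real.continuous_cos.comp (continuous_const.mul continuous_id))))
    (fun α => (sden_pos hκ α).ne')

lemma scatSig_hasDerivAt {κ : ℝ} (hκ : κ ∈ Set.Ioo (-1 : ℝ) 1) {α : ℝ}
    (hcos : Real.cos α ≠ 0) : HasDerivAt (scatSig κ) (scatSig' κ α) α := by
  have hden := sden_pos hκ α
  rw [Real.cos_two_mul] at hden
  obtain ⟨h1, h2⟩ := hκ
  have hκ1 : (0:ℝ) < 1 + κ := by linarith
  have h := (Real.hasDerivAt_arctan ((1 - κ) / (1 + κ) * Real.tan α)).comp α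
    ((Real.hasDerivAt_tan hcos).const_mul ((1 - κ) / (1 + κ)))
  refine h.congr_deriv (Eq.symm ?_)
  unfold scatSig'
  rw [Real.tan_eq_sin_div_cos, Real.cos_two_mul]
  have hs := Real.sin_sq_add_cos_sq α
  have hcos2 : (0:ℝ) < Real.cos α ^ 2 := by positivity
  field_simp
  rw [div_eq_iff (by linarith)]
  linear_combination ((1-κ^2) * (1-κ)^2) * hs

lemma gfun_hasDerivAt {κ : ℝ} (hκ : κ ∈ Set.Ioo (-1 : ℝ) 1) {α : ℝ}
    (hα : α ∈ Set.Ioo (-(π/2)) (π/2)) : HasDerivAt (gfun κ) (scatSig' κ α) α := by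
  have hcos : Real.cos α ≠ 0 := (Real.cos_pos_of_mem_Ioo hα).ne'
  have hev : gfun κ =ᶠ[nhds α] scatSig κ :=
    Filter.eventually_of_mem (isOpen_Ioo.mem_nhds hα) (fun x hx => gfun_eq hκ hx)
  exact (scatSig_hasDerivAt hκ hcos).congr_of_eventuallyEq hev

lemma betaInt (m : ℤ) : ∫ β in (0:ℝ)..(2*π), Complex.exp (Complex.I*m*β)
    = if m = 0 then (2*π:ℂ) else 0 := by
  rcases eq_or_ne m 0 with hm | hm
  · subst hm
    simp
  · rw [if_neg hm]
    have hIm : Complex.I * (m:ℂ) ≠ 0 := by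
      simp [Complex.I_ne_zero, Int.cast_ne_zero, hm]
    have hd : ∀ β ∈ Set.uIcc (0:ℝ) (2*π), HasDerivAt
        (fun β : ℝ => Complex.exp (Complex.I*m*β) / (Complex.I*m))
        (Complex.exp (Complex.I*m*β)) β := by
      intro β _
      have h1 : HasDerivAt (fun β : ℝ => ((β:ℝ):ℂ)) 1 β := Complex.ofRealCLM.hasDerivAt
      have h2 := ((h1.const_mul (Complex.I*(m:ℂ))).cexp).div_const (Complex.I*(m:ℂ))
      refine h2.congr_deriv (Eq.symm ?_)
      field_simp
    rw [intervalIntegral.integral_eq_sub_of_hasDerivAt hd ?_]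
    · push_cast
      rw [show Complex.I * m * (2*π) = m * (2*π*Complex.I) by ring,
        Complex.exp_int_mul_two_pi_mul_I]
      simp
    · apply Continuous.intervalIntegrable
      exact Complex.continuous_exp.comp ((continuous_const.mul Complex.continuous_ofReal))

lemma Jg {κ : ℝ} (hκ : κ ∈ Set.Ioo (-1 : ℝ) 1) (M : ℤ) :
    ∫ α in (-(π/2))..(π/2), (scatSig' κ α : ℂ) * Complex.exp (Complex.I*M*(gfun κ α : ℝ))
      = if M = 0 then (π:ℂ) else
        (Complex.exp (Complex.I*M*((π/2 : ℝ) : ℂ)) -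
          Complex.exp (Complex.I*M*((-(π/2) : ℝ) : ℂ))) / (Complex.I*M) := by
  have hab : (-(π/2) : ℝ) ≤ π/2 := by linarith [Real.pi_pos]
  rcases eq_or_ne M 0 with hM | hM
  · subst hM
    rw [if_pos rfl]
    simp only [Int.cast_zero, mul_zero, zero_mul, Complex.exp_zero, mul_one]
    rw [intervalIntegral.integral_ofReal]
    rw [intervalIntegral.integral_eq_sub_of_hasDeriv_right_of_le hab
        ((gfun_continuous hκ).continuousOn)
        (fun x hx => (gfun_hasDerivAt hκ hx).hasDerivWithinAt)
        ((scatSig'_continuous hκ).intervalIntegrable _ _)]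
    rw [gfun_pi_div_two, gfun_neg_pi_div_two]
    push_cast
    ring
  · rw [if_neg hM]
    have hIm : Complex.I * (M:ℂ) ≠ 0 := by
      simp [Complex.I_ne_zero, Int.cast_ne_zero, hM]
    have hcontg : Continuous (fun α : ℝ => ((gfun κ α : ℝ) : ℂ)) :=
      Complex.continuous_ofReal.comp (gfun_continuous hκ)
    have hcontF : ContinuousOn
        (fun α : ℝ => Complex.exp (Complex.I*M*(gfun κ α : ℝ)) / (Complex.I*M))
        (Set.Icc (-(π/2)) (π/2)) :=
      ((Complex.continuous_exp.comp (continuous_const.mul hcontg)).div_const _).continuousOn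
    have hcontf : Continuous
        (fun α : ℝ => (scatSig' κ α : ℂ) * Complex.exp (Complex.I*M*(gfun κ α : ℝ))) :=
      (Complex.continuous_ofReal.comp (scatSig'_continuous hκ)).mul
        (Complex.continuous_exp.comp (continuous_const.mul hcontg))
    have hd : ∀ x ∈ Set.Ioo (-(π/2) : ℝ) (π/2), HasDerivWithinAt
        (fun α : ℝ => Complex.exp (Complex.I*M*(gfun κ α : ℝ)) / (Complex.I*M))
        ((scatSig' κ x : ℂ) * Complex.exp (Complex.I*M*(gfun κ x : ℝ))) (Set.Ioi x) x := by
      intro x hx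
      have h1 : HasDerivAt (fun α : ℝ => ((gfun κ α : ℝ) : ℂ)) ((scatSig' κ x : ℝ) : ℂ) x :=
        (gfun_hasDerivAt hκ hx).ofReal_comp
      have h2 := ((h1.const_mul (Complex.I*(M:ℂ))).cexp).div_const (Complex.I*(M:ℂ))
      refine HasDerivAt.hasDerivWithinAt ?_
      refine h2.congr_deriv (Eq.symm ?_)
      field_simp
    rw [intervalIntegral.integral_eq_sub_of_hasDeriv_right_of_le hab hcontF hd
        (hcontf.intervalIntegrable _ _)]
    rw [gfun_pi_div_two, gfun_neg_pi_div_two]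
    ring

lemma JgEven {κ : ℝ} (hκ : κ ∈ Set.Ioo (-1 : ℝ) 1) {M : ℤ} (hM : Even M) :
    ∫ α in (-(π/2))..(π/2), (scatSig' κ α : ℂ) * Complex.exp (Complex.I*M*(gfun κ α : ℝ))
      = if M = 0 then (π:ℂ) else 0 := by
  rw [Jg hκ M]
  rcases eq_or_ne M 0 with hM0 | hM0
  · simp [hM0]
  · rw [if_neg hM0, if_neg hM0]
    obtain ⟨j, hj⟩ := hM
    have key : ∀ z : ℂ, Complex.exp (Complex.I*(M:ℂ)*z) = Complex.exp (z*Complex.I) ^ M := by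
      intro z
      rw [show Complex.I*(M:ℂ)*z = (M:ℂ)*(z*Complex.I) by ring, Complex.exp_int_mul]
    rw [key, key]
    have e1 : Complex.exp (((π/2 : ℝ) : ℂ) * Complex.I) = Complex.I := by
      rw [Complex.exp_mul_I, ← Complex.ofReal_cos, ← Complex.ofReal_sin]
      simp
    have e2 : Complex.exp (((-(π/2) : ℝ) : ℂ) * Complex.I) = -Complex.I := by
      rw [Complex.exp_mul_I, ← Complex.ofReal_cos, ← Complex.ofReal_sin]
      simp
    rw [e1, e2, hj]
    have hI : (Complex.I : ℂ) ≠ 0 := Complex.I_ne_zero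
    have hnI : (-Complex.I : ℂ) ≠ 0 := neg_ne_zero.mpr Complex.I_ne_zero
    rw [zpow_add₀ hI, zpow_add₀ hnI, ← mul_zpow, ← mul_zpow]
    norm_num


/-- The boundary functions
`ψ^κ_{n,k}(β,α) = ((-1)^n/(4π)) √(𝔰_κ'(α)) e^{i(n-2k)(β+𝔰_κ(α))}
  (e^{i(n+1)𝔰_κ(α)} + (-1)^n e^{-i(n+1)𝔰_κ(α)})`. -/
noncomputable def psi (κ : ℝ) (n : ℕ) (k : ℤ) (β α : ℝ) : ℂ :=
  ((-1 : ℂ) ^ n / (4 * π)) * (Real.sqrt (scatSig' κ α) : ℂ) *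
    Complex.exp (Complex.I * ((n : ℂ) - 2 * k) * ((β : ℂ) + (scatSig κ α : ℝ))) *
    (Complex.exp (Complex.I * ((n : ℂ) + 1) * (scatSig κ α : ℝ)) +
      (-1 : ℂ) ^ n * Complex.exp (-Complex.I * ((n : ℂ) + 1) * (scatSig κ α : ℝ)))

lemma exp_mul_exp_mul (a b c : ℂ) :
    Complex.exp a * (Complex.exp b * c) = Complex.exp (a+b) * c := by
  rw [Complex.exp_add]; ring

lemma exp_mul_exp (a b : ℂ) : Complex.exp a * Complex.exp b = Complex.exp (a+b) :=
  (Complex.exp_add a b).symm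

lemma exp_ofReal_comm (a : ℂ) (x : ℝ) (b : ℂ) :
    Complex.exp a * ((x:ℂ) * b) = (x:ℂ) * (Complex.exp a * b) := by ring

lemma exp_ofReal_comm' (a : ℂ) (x : ℝ) :
    Complex.exp a * (x:ℂ) = (x:ℂ) * Complex.exp a := by ring

lemma contJ {κ : ℝ} (hκ : κ ∈ Set.Ioo (-1 : ℝ) 1) (c : ℂ) :
    Continuous fun α : ℝ => (scatSig' κ α : ℂ) * Complex.exp (c * ((gfun κ α : ℝ) : ℂ)) :=
  (Complex.continuous_ofReal.comp (scatSig'_continuous hκ)).mul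
    (Complex.continuous_exp.comp (continuous_const.mul
      (Complex.continuous_ofReal.comp (gfun_continuous hκ))))


/-- For `κ ∈ (-1,1)`, the family `ψ^κ_{n,k}` is orthogonal in `L²(∂₊SM, dΣ²)`, with squared
norm `1/(4(1+κ))`: the weighted inner product
`(1/(1+κ)) ∫₀^{2π} ∫_{-π/2}^{π/2} ψ^κ_{n,k} conj(ψ^κ_{n',k'}) dα dβ` equals `1/(4(1+κ))` if
`(n,k) = (n',k')` and `0` otherwise. -/
theorem psi_orthogonal (κ : ℝ) (hκ : κ ∈ Set.Ioo (-1 : ℝ) 1)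
    (n n' : ℕ) (k k' : ℤ) :
    (1 / (1 + (κ : ℂ))) *
      ∫ β in (0 : ℝ)..(2 * π), ∫ α in (-(π / 2))..(π / 2),
        psi κ n k β α * (starRingEnd ℂ) (psi κ n' k' β α) =
      if n = n' ∧ k = k' then (1 / (4 * (1 + (κ : ℂ)))) else 0 := by
  have hπ : (0:ℝ) < π := Real.pi_pos
  have hab : (-(π/2) : ℝ) ≤ π/2 := by linarith
  set m : ℤ := ((n:ℤ) - 2*k) - ((n':ℤ) - 2*k') with hm_def
  set M₁ : ℤ := m + (n:ℤ) - (n':ℤ) with hM1_def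
  set M₂ : ℤ := m + (n:ℤ) + (n':ℤ) + 2 with hM2_def
  set M₃ : ℤ := m - (n:ℤ) - (n':ℤ) - 2 with hM3_def
  set M₄ : ℤ := m - (n:ℤ) + (n':ℤ) with hM4_def
  set C : ℂ := (-1:ℂ)^(n+n') / (16*(π:ℂ)^2) with hC_def
  set Q : ℝ → ℂ := fun α =>
      (Complex.exp (Complex.I * (M₁:ℂ) * ((scatSig κ α : ℝ) : ℂ))
       + (-1:ℂ)^n' * Complex.exp (Complex.I * (M₂:ℂ) * ((scatSig κ α : ℝ) : ℂ))
       + (-1:ℂ)^n * Complex.exp (Complex.I * (M₃:ℂ) * ((scatSig κ α : ℝ) : ℂ))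
       + (-1:ℂ)^(n+n') * Complex.exp (Complex.I * (M₄:ℂ) * ((scatSig κ α : ℝ) : ℂ))) with hQ_def
  have key : ∀ β α : ℝ, psi κ n k β α * (starRingEnd ℂ) (psi κ n' k' β α)
      = Complex.exp (Complex.I * (m:ℂ) * (β:ℂ)) * (C * ((scatSig' κ α : ℂ) * Q α)) := by
    intro β α
    have hpos : 0 ≤ scatSig' κ α := (scatSig'_pos hκ α).le
    have hsq : (Real.sqrt (scatSig' κ α) : ℂ) * (Real.sqrt (scatSig' κ α) : ℂ)
        = (scatSig' κ α : ℂ) := by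
      rw [← Complex.ofReal_mul, Real.mul_self_sqrt hpos]
    have hsq2 : (Real.sqrt (scatSig' κ α) : ℂ) ^ 2 = (scatSig' κ α : ℂ) := by
      rw [sq]; exact hsq
    simp only [hQ_def, hC_def, hM1_def, hM2_def, hM3_def, hM4_def, hm_def]
    push_cast
    simp only [psi, map_mul, map_div₀, map_pow, map_add, map_sub, map_neg, map_one, map_ofNat,
      Complex.conj_ofReal, ← Complex.exp_conj, Complex.conj_I, map_natCast, map_intCast]
    ring_nf
    rw [hsq2]
    simp only [pow_mul', neg_one_sq, one_pow, mul_assoc, exp_ofReal_comm, exp_ofReal_comm',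
      exp_mul_exp_mul, exp_mul_exp]
    ring_nf
  set JQ : ℂ := ∫ α in (-(π/2))..(π/2), (scatSig' κ α : ℂ) * Q α with hJQ_def
  have houter : (∫ β in (0:ℝ)..(2*π), ∫ α in (-(π/2))..(π/2),
        psi κ n k β α * (starRingEnd ℂ) (psi κ n' k' β α))
      = (if m = 0 then (2*(π:ℂ)) else 0) * (C * JQ) := by
    rw [intervalIntegral.integral_congr
        (g := fun β : ℝ => Complex.exp (Complex.I * (m:ℂ) * (β:ℂ)) * (C * JQ)) ?_]
    · rw [intervalIntegral.integral_mul_const, betaInt]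
    · intro β _
      simp only [key]
      rw [intervalIntegral.integral_const_mul, intervalIntegral.integral_const_mul]
  -- value of JQ when m = 0
  rcases eq_or_ne m 0 with hm | hm
  · -- JQ via gfun
    have hae : JQ = ∫ α in (-(π/2))..(π/2), (scatSig' κ α : ℂ) *
        (Complex.exp (Complex.I * (M₁:ℂ) * ((gfun κ α : ℝ) : ℂ))
         + (-1:ℂ)^n' * Complex.exp (Complex.I * (M₂:ℂ) * ((gfun κ α : ℝ) : ℂ))
         + (-1:ℂ)^n * Complex.exp (Complex.I * (M₃:ℂ) * ((gfun κ α : ℝ) : ℂ))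
         + (-1:ℂ)^(n+n') * Complex.exp (Complex.I * (M₄:ℂ) * ((gfun κ α : ℝ) : ℂ))) := by
      rw [hJQ_def]
      apply intervalIntegral.integral_congr_ae
      have h1 : ∀ᵐ α : ℝ, α ≠ π/2 := by
        have := MeasureTheory.measure_eq_zero_iff_ae_notMem.mp
          (MeasureTheory.measure_singleton (π/2) : MeasureTheory.volume {(π/2 : ℝ)} = 0)
        filter_upwards [this] with α hα using by simpa using hα
      filter_upwards [h1] with α hα hmem
      rw [Set.uIoc_of_le hab] at hmem
      have hIoo : α ∈ Set.Ioo (-(π/2)) (π/2) := ⟨hmem.1, lt_of_le_of_ne hmem.2 hα⟩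
      rw [hQ_def]
      rw [gfun_eq hκ hIoo]
    have hsplit : JQ =
        (∫ α in (-(π/2))..(π/2), (scatSig' κ α : ℂ) *
          Complex.exp (Complex.I * (M₁:ℂ) * ((gfun κ α : ℝ) : ℂ)))
        + ((-1:ℂ)^n' * ∫ α in (-(π/2))..(π/2), (scatSig' κ α : ℂ) *
          Complex.exp (Complex.I * (M₂:ℂ) * ((gfun κ α : ℝ) : ℂ)))
        + ((-1:ℂ)^n * ∫ α in (-(π/2))..(π/2), (scatSig' κ α : ℂ) *
          Complex.exp (Complex.I * (M₃:ℂ) * ((gfun κ α : ℝ) : ℂ)))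
        + ((-1:ℂ)^(n+n') * ∫ α in (-(π/2))..(π/2), (scatSig' κ α : ℂ) *
          Complex.exp (Complex.I * (M₄:ℂ) * ((gfun κ α : ℝ) : ℂ))) := by
      rw [hae]
      rw [intervalIntegral.integral_congr
          (g := fun α : ℝ =>
            ((scatSig' κ α : ℂ) * Complex.exp (Complex.I * (M₁:ℂ) * ((gfun κ α : ℝ) : ℂ))
            + (-1:ℂ)^n' * ((scatSig' κ α : ℂ) * Complex.exp (Complex.I * (M₂:ℂ) * ((gfun κ α : ℝ) : ℂ))))
            + ((-1:ℂ)^n * ((scatSig' κ α : ℂ) * Complex.exp (Complex.I * (M₃:ℂ) * ((gfun κ α : ℝ) : ℂ)))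
            + (-1:ℂ)^(n+n') * ((scatSig' κ α : ℂ) * Complex.exp (Complex.I * (M₄:ℂ) * ((gfun κ α : ℝ) : ℂ)))))
          (fun α _ => by ring)]
      rw [intervalIntegral.integral_add
          (((contJ hκ _).intervalIntegrable _ _).add
            (((contJ hκ _).intervalIntegrable _ _).const_mul _))
          ((((contJ hκ _).intervalIntegrable _ _).const_mul _).add
            (((contJ hκ _).intervalIntegrable _ _).const_mul _)),
        intervalIntegral.integral_add
          ((contJ hκ _).intervalIntegrable _ _)
          (((contJ hκ _).intervalIntegrable _ _).const_mul _),
        intervalIntegral.integral_add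
          (((contJ hκ _).intervalIntegrable _ _).const_mul _)
          (((contJ hκ _).intervalIntegrable _ _).const_mul _),
        intervalIntegral.integral_const_mul, intervalIntegral.integral_const_mul,
        intervalIntegral.integral_const_mul]
      ring
    rcases eq_or_ne n n' with hnn | hnn
    · -- diagonal case
      subst hnn
      have hkk : k = k' := by simp only [hm_def] at hm; omega
      subst hkk
      have hM1 : M₁ = 0 := by simp only [hM1_def, hm]; omega
      have hM4 : M₄ = 0 := by simp only [hM4_def, hm]; omega
      have hM2 : M₂ ≠ 0 := by simp only [hM2_def, hm]; omega
      have hM3 : M₃ ≠ 0 := by simp only [hM3_def, hm]; omega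
      have hM2e : Even M₂ := ⟨(n:ℤ) + 1, by simp only [hM2_def, hm]; omega⟩
      have hM3e : Even M₃ := ⟨-(n:ℤ) - 1, by simp only [hM3_def, hm]; omega⟩
      have hJQ : JQ = 2*(π:ℂ) := by
        rw [hsplit, hM1, hM4, JgEven hκ (Even.zero),
          JgEven hκ hM2e, JgEven hκ hM3e, if_pos rfl, if_neg hM2, if_neg hM3]
        ring_nf
        rw [pow_mul', neg_one_sq, one_pow]
        ring
      rw [houter, if_pos hm, hJQ, if_pos ⟨rfl, rfl⟩, hC_def]
      have h11 : ((-1:ℂ))^(n+n) = 1 := by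
        rw [← two_mul, pow_mul, neg_one_sq, one_pow]
      rw [h11]
      have hπC : ((π:ℝ):ℂ) ≠ 0 := Complex.ofReal_ne_zero.mpr hπ.ne'
      have hmid : (2*((π:ℝ):ℂ)) * ((1:ℂ)/(16*((π:ℝ):ℂ)^2) * (2*((π:ℝ):ℂ)))
          = 1/4 := by
        field_simp
        ring
      calc (1 / (1 + (κ:ℂ))) * (2*((π:ℝ):ℂ) * (1 / (16*((π:ℝ):ℂ)^2) * (2*((π:ℝ):ℂ))))
          = (1 / (1 + (κ:ℂ))) * ((2*((π:ℝ):ℂ)) * ((1:ℂ)/(16*((π:ℝ):ℂ)^2) * (2*((π:ℝ):ℂ)))) := by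
            ring
        _ = (1 / (1 + (κ:ℂ))) * (1/4) := by rw [hmid]
        _ = 1 / (4 * (1 + (κ:ℂ))) := by
            rw [div_mul_div_comm]
            ring_nf
    · -- off-diagonal, m = 0
      have hnn2 : ((n:ℤ) - n') = 2*(k - k') := by simp only [hm_def] at hm; omega
      have hM1e : Even M₁ := ⟨k - k', by simp only [hM1_def, hm]; omega⟩
      have hM4e : Even M₄ := ⟨k' - k, by simp only [hM4_def, hm]; omega⟩
      have hM2e : Even M₂ := ⟨k - k' + (n':ℤ) + 1, by simp only [hM2_def, hm]; omega⟩
      have hM3e : Even M₃ := ⟨k' - k - (n':ℤ) - 1, by simp only [hM3_def, hm]; omega⟩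
      have hM1 : M₁ ≠ 0 := by simp only [hM1_def, hm]; omega
      have hM4 : M₄ ≠ 0 := by simp only [hM4_def, hm]; omega
      have hM2 : M₂ ≠ 0 := by simp only [hM2_def, hm]; omega
      have hM3 : M₃ ≠ 0 := by simp only [hM3_def, hm]; omega
      have hJQ : JQ = 0 := by
        rw [hsplit, JgEven hκ hM1e, JgEven hκ hM2e, JgEven hκ hM3e, JgEven hκ hM4e,
          if_neg hM1, if_neg hM2, if_neg hM3, if_neg hM4]
        ring
      have hcond : ¬(n = n' ∧ k = k') := fun h => hnn h.1
      rw [houter, if_pos hm, hJQ, if_neg hcond]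
      ring
  · have hcond : ¬(n = n' ∧ k = k') := by
      intro h
      obtain ⟨h1, h2⟩ := h
      apply hm
      simp only [hm_def]
      omega
    rw [houter, if_neg hm, if_neg hcond]
    ring
end

section
/- For all integers n ≥ 0 and 0 ≤ k ≤ n, ((-1)^n/(2π))·∫₀^{2π} e^{i(n-2k)θ}·W_n(sinθ) dθ = (-1)^k. Equivalently, the Zernike function Z_{n,k}(ρe^{iω}) = ((-1)^n/(2π))·∫₀^{2π} e^{i(n-2k)θ}·W_n(ρsin(θ-ω)) dθ satisfies the boundary condition Z_{n,k}(e^{iω}) = (-1)^k e^{i(n-2k)ω} for all ω. -/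
open Real Complex intervalIntegral

/-- The polynomials `W_n(t) = iⁿ U_n(t)` (`U_n` the Chebyshev polynomials of the second kind):
`W₀(t) = 1`, `W₁(t) = 2it`, `W_{n+2}(t) = 2it W_{n+1}(t) + W_n(t)`. -/
noncomputable def W : ℕ → ℂ → ℂ
  | 0, _ => 1
  | 1, t => 2 * Complex.I * t
  | (n + 2), t => 2 * Complex.I * t * W (n + 1) t + W n t

lemma two_I_sin (θ : ℝ) :
    2 * Complex.I * ((Real.sin θ : ℝ) : ℂ)
      = Complex.exp (Complex.I * θ) - (Complex.exp (Complex.I * θ))⁻¹ := by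
  rw [Complex.ofReal_sin, Complex.sin, ← Complex.exp_neg]
  rw [show -(Complex.I * θ) = -θ * Complex.I by ring, show Complex.I * (θ:ℂ) = θ * Complex.I by ring]
  have := Complex.I_sq
  field_simp
  ring_nf
  rw [Complex.I_sq]
  ring

lemma W_sin (n : ℕ) (θ : ℝ) :
    W n ((Real.sin θ : ℝ) : ℂ)
      = ∑ j ∈ Finset.range (n + 1),
          (-1 : ℂ) ^ j * Complex.exp (Complex.I * θ) ^ ((n : ℤ) - 2 * j) := by
  set z := Complex.exp (Complex.I * θ) with hzdef
  have hz : z ≠ 0 := Complex.exp_ne_zero _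
  induction n using Nat.twoStepInduction with
  | zero => simp [W]
  | one =>
      rw [W, two_I_sin θ]
      simp only [Finset.sum_range_succ, Finset.sum_range_zero, ← hzdef]
      norm_num [zpow_neg_one, sub_eq_add_neg]
  | more n ih2 ih1 =>
      rw [W, two_I_sin θ, ih1, ih2]
      have hA : z * (∑ j ∈ Finset.range (n + 2),
            (-1 : ℂ) ^ j * z ^ (((n + 1 : ℕ) : ℤ) - 2 * j))
          = ∑ j ∈ Finset.range (n + 2), (-1 : ℂ) ^ j * z ^ (((n + 2 : ℕ) : ℤ) - 2 * j) := by
        rw [Finset.mul_sum]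
        refine Finset.sum_congr rfl fun j _ => ?_
        rw [show ((n + 2 : ℕ) : ℤ) - 2 * j = 1 + (((n + 1 : ℕ) : ℤ) - 2 * j) by push_cast; ring,
          zpow_add₀ hz, zpow_one]
        ring
      have hB : z⁻¹ * (∑ j ∈ Finset.range (n + 2),
            (-1 : ℂ) ^ j * z ^ (((n + 1 : ℕ) : ℤ) - 2 * j))
          = ∑ j ∈ Finset.range (n + 2), (-1 : ℂ) ^ j * z ^ ((n : ℤ) - 2 * j) := by
        rw [Finset.mul_sum]
        refine Finset.sum_congr rfl fun j _ => ?_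
        rw [show (n : ℤ) - 2 * j = (-1) + (((n + 1 : ℕ) : ℤ) - 2 * j) by push_cast; ring,
          zpow_add₀ hz, zpow_neg_one]
        ring
      have hB' : ∑ j ∈ Finset.range (n + 2), (-1 : ℂ) ^ j * z ^ ((n : ℤ) - 2 * j)
          = (∑ j ∈ Finset.range (n + 1), (-1 : ℂ) ^ j * z ^ ((n : ℤ) - 2 * j))
            + (-1 : ℂ) ^ (n + 1) * z ^ ((n : ℤ) - 2 * (n + 1)) := by
        rw [Finset.sum_range_succ]
        norm_cast
      have hC : ∑ j ∈ Finset.range (n + 3), (-1 : ℂ) ^ j * z ^ (((n + 2 : ℕ) : ℤ) - 2 * j)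
          = (∑ j ∈ Finset.range (n + 2), (-1 : ℂ) ^ j * z ^ (((n + 2 : ℕ) : ℤ) - 2 * j))
            + (-1 : ℂ) ^ (n + 2) * z ^ ((n : ℤ) - 2 * (n + 1)) := by
        rw [Finset.sum_range_succ,
          show ((n + 2 : ℕ) : ℤ) - 2 * ((n + 2 : ℕ) : ℤ) = (n : ℤ) - 2 * (n + 1) by
            push_cast; ring]
      rw [sub_mul]
      rw [hA, hB, hB', hC]
      ring

lemma integral_exp_I_int (m : ℤ) :
    ∫ θ in (0 : ℝ)..(2 * π), Complex.exp (Complex.I * (m : ℂ) * θ)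
      = if m = 0 then (2 * π : ℂ) else 0 := by
  by_cases hm : m = 0
  · simp [hm, Complex.ofReal_mul]
  · have hc : Complex.I * (m : ℂ) ≠ 0 := by
      simp [Complex.I_ne_zero, hm]
    rw [integral_exp_mul_complex hc]
    have h1 : Complex.exp (Complex.I * (m : ℂ) * (2 * (π : ℂ))) = 1 := by
      rw [show Complex.I * (m : ℂ) * (2 * (π : ℂ)) = (m : ℂ) * (2 * (π : ℂ) * Complex.I) by ring]
      exact Complex.exp_int_mul_two_pi_mul_I m
    simp only [hm, if_false, Complex.ofReal_mul, Complex.ofReal_ofNat, Complex.exp_zero, mul_zero,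
      Complex.ofReal_zero, h1]
    simp

/-- For all integers `n ≥ 0` and `0 ≤ k ≤ n`,
`((-1)^n/(2π)) ∫₀^{2π} e^{i(n-2k)θ} W_n(sin θ) dθ = (-1)^k`, i.e. the Zernike function
`Z_{n,k}` satisfies the boundary condition `Z_{n,k}(e^{iω}) = (-1)^k e^{i(n-2k)ω}`. -/
theorem Znk_boundary_value (n k : ℕ) (hk : k ≤ n) :
    ((-1 : ℂ) ^ n / (2 * π)) *
      ∫ θ in (0 : ℝ)..(2 * π),
        Complex.exp (Complex.I * ((n : ℂ) - 2 * k) * θ) * W n ((Real.sin θ : ℝ) : ℂ) =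
      (-1 : ℂ) ^ k := by
  have hW : ∀ θ : ℝ,
      Complex.exp (Complex.I * ((n : ℂ) - 2 * k) * θ) * W n ((Real.sin θ : ℝ) : ℂ)
        = ∑ j ∈ Finset.range (n + 1),
            (-1 : ℂ) ^ j *
              Complex.exp (Complex.I * ((2 * (n : ℤ) - 2 * k - 2 * j : ℤ) : ℂ) * θ) := by
    intro θ
    rw [W_sin, Finset.mul_sum]
    refine Finset.sum_congr rfl fun j _ => ?_
    rw [← Complex.exp_int_mul, mul_left_comm, ← Complex.exp_add,
      show Complex.I * ((n : ℂ) - 2 * k) * θ + (((n : ℤ) - 2 * j : ℤ) : ℂ) * (Complex.I * θ)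
        = Complex.I * ((2 * (n : ℤ) - 2 * k - 2 * j : ℤ) : ℂ) * θ by push_cast; ring]
  have hint : (∫ θ in (0 : ℝ)..(2 * π),
      Complex.exp (Complex.I * ((n : ℂ) - 2 * k) * θ) * W n ((Real.sin θ : ℝ) : ℂ))
      = ∑ j ∈ Finset.range (n + 1),
          (-1 : ℂ) ^ j *
            ∫ θ in (0 : ℝ)..(2 * π),
              Complex.exp (Complex.I * ((2 * (n : ℤ) - 2 * k - 2 * j : ℤ) : ℂ) * θ) := by
    simp_rw [hW]
    rw [intervalIntegral.integral_finset_sum]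
    · exact Finset.sum_congr rfl fun j _ => intervalIntegral.integral_const_mul _ _
    · intro j _
      apply Continuous.intervalIntegrable
      fun_prop
  rw [hint]
  have hsum : ∑ j ∈ Finset.range (n + 1),
      (-1 : ℂ) ^ j *
        ∫ θ in (0 : ℝ)..(2 * π),
          Complex.exp (Complex.I * ((2 * (n : ℤ) - 2 * k - 2 * j : ℤ) : ℂ) * θ)
      = (-1 : ℂ) ^ (n - k) * (2 * π) := by
    simp_rw [integral_exp_I_int]
    rw [Finset.sum_eq_single (n - k)]
    · rw [if_pos (by omega)]
    · intro j hj hne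
      rw [if_neg (by simp only [Finset.mem_range] at hj; omega), mul_zero]
    · intro h
      exact absurd (Finset.mem_range.mpr (by omega)) h
  rw [hsum]
  have hπ : (π : ℂ) ≠ 0 := Complex.ofReal_ne_zero.mpr Real.pi_ne_zero
  have h2 : (2 * (π : ℂ)) ≠ 0 := by simp [hπ]
  field_simp
  rw [← pow_add, show n + (n - k) = k + 2 * (n - k) by omega, pow_add, pow_mul]
  norm_num
end

section
/- Let κ ∈ (-1,1), let 𝔻 denote the open unit disk in ℂ, and let Φ(z) = (1-κ)z/(1-κ|z|²), which maps 𝔻 bijectively onto itself. Let F, G : 𝔻 → ℂ be measurable with F·conj(G) Lebesgue-integrable on 𝔻. Define f(z) = √((1-κ)/(1+κ))·((1+κ|z|²)/(1-κ|z|²))·F(Φ(z)) and g(z) = √((1-κ)/(1+κ))·((1+κ|z|²)/(1-κ|z|²))·G(Φ(z)). Then ∫_𝔻 f(z)·conj(g(z))·((1+κ|z|²)/(1-κ|z|²))·(1+κ|z|²)^{-2} dA(z) = (1/(1-κ²))·∫_𝔻 F(w)·conj(G(w)) dA(w), where dA denotes Lebesgue measure on ℂ. -/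
open Complex MeasureTheory

noncomputable def Amap (a b : ℂ) : ℂ →L[ℝ] ℂ :=
  a • ContinuousLinearMap.id ℝ ℂ + b • (Complex.conjCLE : ℂ ≃L[ℝ] ℂ).toContinuousLinearMap

lemma Amap_apply (a b h : ℂ) : Amap a b h = a * h + b * (starRingEnd ℂ) h := by
  simp [Amap, smul_eq_mul]

lemma det_Amap (a b : ℂ) : (Amap a b).det = Complex.normSq a - Complex.normSq b := by
  rw [ContinuousLinearMap.det, ← LinearMap.det_toMatrix Complex.basisOneI, Matrix.det_fin_two]
  simp only [LinearMap.toMatrix_apply, Complex.coe_basisOneI, ContinuousLinearMap.coe_coe,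
    Matrix.cons_val_zero, Matrix.cons_val_one, Matrix.head_cons, Amap_apply,
    Complex.coe_basisOneI_repr]
  simp [Complex.normSq_apply]
  ring

lemma det_calc (κ r : ℝ) (hd : (1 : ℝ) - κ * r ^ 2 ≠ 0) :
    (1 - κ) / (1 - κ * r ^ 2) ^ 2 * ((1 - κ) / (1 - κ * r ^ 2) ^ 2)
      - (1 - κ) * κ / (1 - κ * r ^ 2) ^ 2 * ((1 - κ) * κ / (1 - κ * r ^ 2) ^ 2) * (r ^ 2) ^ 2
    = (1 - κ) ^ 2 * (1 + κ * r ^ 2) / (1 - κ * r ^ 2) ^ 3 := by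
  field_simp
  ring

lemma coef_calc (κ r : ℝ) (hκ1' : 0 < 1 + κ) (hκ2' : 0 < 1 - κ)
    (hd1 : 0 < 1 - κ * r ^ 2) (hd2 : 0 < 1 + κ * r ^ 2) (hκsq : (1 : ℝ) - κ ^ 2 ≠ 0) :
    ((1 - κ) / (1 + κ)) * (((1 + κ * r ^ 2) / (1 - κ * r ^ 2)) *
        ((1 + κ * r ^ 2) / (1 - κ * r ^ 2)) *
        (((1 + κ * r ^ 2) / (1 - κ * r ^ 2)) / (1 + κ * r ^ 2) ^ 2))
    = (1 / (1 - κ ^ 2)) * ((1 - κ) ^ 2 * (1 + κ * r ^ 2) / (1 - κ * r ^ 2) ^ 3) := by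
  field_simp
  ring

lemma denom_eq (κ : ℝ) (w : ℂ) :
    ((1 - κ * ‖w‖ ^ 2 : ℝ) : ℂ) = 1 - (κ : ℂ) * (w * (starRingEnd ℂ) w) := by
  rw [Complex.mul_conj]
  push_cast [Complex.normSq_eq_norm_sq]
  ring

lemma hasFDerivAt_phi (κ : ℝ) {z : ℂ} (hz : (1 : ℝ) - κ * ‖z‖ ^ 2 ≠ 0) :
    HasFDerivAt (fun w : ℂ => ((1 - κ : ℝ) : ℂ) * w / ((1 - κ * ‖w‖ ^ 2 : ℝ) : ℂ))
      (Amap ((((1 - κ) / (1 - κ * ‖z‖ ^ 2) ^ 2 : ℝ)) : ℂ)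
        (((((1 - κ) * κ / (1 - κ * ‖z‖ ^ 2) ^ 2 : ℝ)) : ℂ) * z ^ 2)) z := by
  have hfun : (fun w : ℂ => ((1 - κ : ℝ) : ℂ) * w / ((1 - κ * ‖w‖ ^ 2 : ℝ) : ℂ))
      = fun w : ℂ => (((1 - κ : ℝ) : ℂ) * w) * (1 - (κ : ℂ) * (w * (starRingEnd ℂ) w))⁻¹ := by
    funext w
    rw [div_eq_mul_inv, denom_eq]
  rw [hfun]
  have hdz : (1 : ℂ) - (κ : ℂ) * (z * (starRingEnd ℂ) z) ≠ 0 := by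
    rw [← denom_eq]; exact Complex.ofReal_ne_zero.mpr hz
  have hC : HasFDerivAt (fun w : ℂ => (starRingEnd ℂ) w)
      ((Complex.conjCLE : ℂ ≃L[ℝ] ℂ).toContinuousLinearMap) z :=
    Complex.conjCLE.hasFDerivAt
  have hmul : HasFDerivAt (fun w : ℂ => w * (starRingEnd ℂ) w)
      (z • (Complex.conjCLE : ℂ ≃L[ℝ] ℂ).toContinuousLinearMap +
        ((starRingEnd ℂ) z) • ContinuousLinearMap.id ℝ ℂ) z :=
    (hasFDerivAt_id z).mul hC
  have hdd : HasFDerivAt (fun w : ℂ => 1 - (κ : ℂ) * (w * (starRingEnd ℂ) w))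
      (-((κ : ℂ) • (z • (Complex.conjCLE : ℂ ≃L[ℝ] ℂ).toContinuousLinearMap +
        ((starRingEnd ℂ) z) • ContinuousLinearMap.id ℝ ℂ))) z :=
    (hmul.const_mul (κ : ℂ)).const_sub 1
  have hinv0 : HasDerivAt (fun y : ℂ => y⁻¹)
      (-(((1 : ℂ) - (κ : ℂ) * (z * (starRingEnd ℂ) z)) ^ 2)⁻¹)
      ((1 : ℂ) - (κ : ℂ) * (z * (starRingEnd ℂ) z)) := hasDerivAt_inv hdz
  have hinv := (hinv0.hasFDerivAt.restrictScalars ℝ).comp z hdd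
  have hn : HasFDerivAt (fun w : ℂ => ((1 - κ : ℝ) : ℂ) * w)
      (((1 - κ : ℝ) : ℂ) • ContinuousLinearMap.id ℝ ℂ) z :=
    (hasFDerivAt_id z).const_mul _
  have hfin := hn.mul hinv
  refine HasFDerivAt.congr_fderiv hfin ?_
  ext h
  have hzC : ((1 - κ * ‖z‖ ^ 2 : ℝ) : ℂ) ≠ 0 := Complex.ofReal_ne_zero.mpr hz
  simp only [Amap_apply, ContinuousLinearMap.add_apply, ContinuousLinearMap.smul_apply,
    ContinuousLinearMap.comp_apply, ContinuousLinearMap.neg_apply,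
    ContinuousLinearMap.coe_restrictScalars', ContinuousLinearMap.smulRight_apply, ContinuousLinearMap.toSpanSingleton_apply,
    ContinuousLinearMap.one_apply, ContinuousLinearMap.id_apply,
    ContinuousLinearEquiv.coe_coe, Complex.conjCLE_apply, smul_eq_mul, Function.comp_apply]
  rw [Complex.ofReal_div, Complex.ofReal_div, Complex.ofReal_pow, denom_eq]
  field_simp
  push_cast
  ring

/-- Let `κ ∈ (-1,1)`, let `𝔻` be the open unit disk in `ℂ`, and let
`Φ(z) = (1-κ)z/(1-κ|z|²)`, which maps `𝔻` bijectively onto itself. If `F, G : 𝔻 → ℂ` are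
measurable with `F conj(G)` integrable on `𝔻`, and
`f(z) = √((1-κ)/(1+κ)) ((1+κ|z|²)/(1-κ|z|²)) F(Φ(z))` (similarly for `g` from `G`), then
`∫_𝔻 f conj(g) ((1+κ|z|²)/(1-κ|z|²)) (1+κ|z|²)^{-2} dA = (1/(1-κ²)) ∫_𝔻 F conj(G) dA`. -/
theorem weighted_change_of_variables (κ : ℝ) (hκ : κ ∈ Set.Ioo (-1 : ℝ) 1)
    (F G : ℂ → ℂ) (hF : Measurable F) (hG : Measurable G)
    (hFG : IntegrableOn (fun w => F w * (starRingEnd ℂ) (G w)) (Metric.ball (0 : ℂ) 1) volume)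
    (f g : ℂ → ℂ)
    (hf : ∀ z : ℂ, f z = (Real.sqrt ((1 - κ) / (1 + κ)) : ℂ) *
        (((1 + κ * ‖z‖ ^ 2) / (1 - κ * ‖z‖ ^ 2) : ℝ) : ℂ) *
        F (((1 - κ : ℝ) : ℂ) * z / (((1 - κ * ‖z‖ ^ 2 : ℝ)) : ℂ)))
    (hg : ∀ z : ℂ, g z = (Real.sqrt ((1 - κ) / (1 + κ)) : ℂ) *
        (((1 + κ * ‖z‖ ^ 2) / (1 - κ * ‖z‖ ^ 2) : ℝ) : ℂ) *
        G (((1 - κ : ℝ) : ℂ) * z / (((1 - κ * ‖z‖ ^ 2 : ℝ)) : ℂ))) :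
    Set.BijOn (fun z : ℂ => (((1 - κ : ℝ)) : ℂ) * z / (((1 - κ * ‖z‖ ^ 2 : ℝ)) : ℂ))
        (Metric.ball (0 : ℂ) 1) (Metric.ball (0 : ℂ) 1) ∧
    ∫ z in Metric.ball (0 : ℂ) 1,
        f z * (starRingEnd ℂ) (g z) *
          ((((1 + κ * ‖z‖ ^ 2) / (1 - κ * ‖z‖ ^ 2)) / (1 + κ * ‖z‖ ^ 2) ^ 2 : ℝ) : ℂ) =
      ((1 / (1 - κ ^ 2) : ℝ) : ℂ) *
        ∫ w in Metric.ball (0 : ℂ) 1, F w * (starRingEnd ℂ) (G w) := by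
  obtain ⟨hκ1, hκ2⟩ := hκ
  have hκ1' : 0 < 1 + κ := by linarith
  have hκ2' : 0 < 1 - κ := by linarith
  have hpos1 : ∀ r : ℝ, 0 ≤ r → r ≤ 1 → 0 < 1 - κ * r ^ 2 := by
    intro r h0 h1
    have hr2 : r ^ 2 ≤ 1 := by nlinarith
    rcases le_or_gt κ 0 with h | h
    · nlinarith [sq_nonneg r]
    · nlinarith [mul_le_of_le_one_right h.le hr2]
  have hpos2 : ∀ r : ℝ, 0 ≤ r → r ≤ 1 → 0 < 1 + κ * r ^ 2 := by
    intro r h0 h1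
    have hr2 : r ^ 2 ≤ 1 := by nlinarith
    rcases le_or_gt κ 0 with h | h
    · nlinarith
    · nlinarith [sq_nonneg r]
  have hnormφ : ∀ z : ℂ, 0 < 1 - κ * ‖z‖ ^ 2 →
      ‖((1 - κ : ℝ) : ℂ) * z / ((1 - κ * ‖z‖ ^ 2 : ℝ) : ℂ)‖
        = (1 - κ) * ‖z‖ / (1 - κ * ‖z‖ ^ 2) := by
    intro z hd
    rw [norm_div, norm_mul, Complex.norm_real, Complex.norm_real, Real.norm_eq_abs,
      Real.norm_eq_abs, abs_of_pos hκ2', abs_of_pos hd]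
  have hradial : ∀ r s : ℝ, 0 ≤ r → r < 1 → 0 ≤ s → s < 1 →
      (1 - κ) * r / (1 - κ * r ^ 2) = (1 - κ) * s / (1 - κ * s ^ 2) → r = s := by
    intro r s hr0 hr1 hs0 hs1 heq
    have h1 := hpos1 r hr0 hr1.le
    have h2 := hpos1 s hs0 hs1.le
    rw [div_eq_div_iff (ne_of_gt h1) (ne_of_gt h2)] at heq
    have hrs0 : 0 ≤ r * s := mul_nonneg hr0 hs0
    have hrs1 : r * s < 1 := by nlinarith
    have h4 : 0 < 1 + κ * (r * s) := by
      rcases le_or_gt κ 0 with h | h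
      · nlinarith
      · nlinarith
    have h5 : (r - s) * ((1 - κ) * (1 + κ * (r * s))) = 0 := by linear_combination heq
    rcases mul_eq_zero.mp h5 with h6 | h6
    · linarith [sub_eq_zero.mp h6]
    · exact absurd h6 (ne_of_gt (mul_pos hκ2' h4))
  have hmaps : Set.MapsTo (fun z : ℂ => (((1 - κ : ℝ)) : ℂ) * z / (((1 - κ * ‖z‖ ^ 2 : ℝ)) : ℂ))
      (Metric.ball (0 : ℂ) 1) (Metric.ball (0 : ℂ) 1) := by
    intro z hz
    rw [Metric.mem_ball, dist_zero_right] at hz ⊢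
    have hd := hpos1 ‖z‖ (norm_nonneg z) hz.le
    rw [hnormφ z hd, div_lt_one hd]
    have h1r : 0 < 1 - ‖z‖ := by linarith
    have h1kr : 0 < 1 + κ * ‖z‖ := by
      rcases le_or_gt κ 0 with h | h
      · nlinarith [norm_nonneg z]
      · nlinarith [norm_nonneg z]
    nlinarith [mul_pos h1r h1kr]
  have hinj : Set.InjOn (fun z : ℂ => (((1 - κ : ℝ)) : ℂ) * z / (((1 - κ * ‖z‖ ^ 2 : ℝ)) : ℂ))
      (Metric.ball (0 : ℂ) 1) := by
    intro z₁ hz₁ z₂ hz₂ heq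
    rw [Metric.mem_ball, dist_zero_right] at hz₁ hz₂
    have hd₁ := hpos1 ‖z₁‖ (norm_nonneg z₁) hz₁.le
    have hd₂ := hpos1 ‖z₂‖ (norm_nonneg z₂) hz₂.le
    have hnorm : ‖z₁‖ = ‖z₂‖ := by
      apply hradial _ _ (norm_nonneg z₁) hz₁ (norm_nonneg z₂) hz₂
      rw [← hnormφ z₁ hd₁, ← hnormφ z₂ hd₂]
      simp only at heq
      rw [heq]
    simp only at heq
    rw [hnorm] at heq
    have hdC : ((1 - κ * ‖z₂‖ ^ 2 : ℝ) : ℂ) ≠ 0 := Complex.ofReal_ne_zero.mpr (ne_of_gt hd₂)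
    have hcC : ((1 - κ : ℝ) : ℂ) ≠ 0 := Complex.ofReal_ne_zero.mpr (ne_of_gt hκ2')
    exact mul_left_cancel₀ hcC ((div_left_inj' hdC).mp heq)
  have hsurj : Set.SurjOn (fun z : ℂ => (((1 - κ : ℝ)) : ℂ) * z / (((1 - κ * ‖z‖ ^ 2 : ℝ)) : ℂ))
      (Metric.ball (0 : ℂ) 1) (Metric.ball (0 : ℂ) 1) := by
    intro w hw
    rw [Metric.mem_ball, dist_zero_right] at hw
    rcases eq_or_ne w 0 with rfl | hw0
    · exact ⟨0, by simp [Metric.mem_ball], by simp⟩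
    · have hs0 : 0 < ‖w‖ := norm_pos_iff.mpr hw0
      obtain ⟨r, hrIcc, hrρ⟩ : ∃ r ∈ Set.Icc (0 : ℝ) 1, (1 - κ) * r / (1 - κ * r ^ 2) = ‖w‖ := by
        have hcont : ContinuousOn (fun r : ℝ => (1 - κ) * r / (1 - κ * r ^ 2))
            (Set.Icc (0 : ℝ) 1) := by
          apply ContinuousOn.div (by fun_prop) (by fun_prop)
          intro r hr
          exact ne_of_gt (hpos1 r hr.1 hr.2)
        have hIVT := intermediate_value_Icc (by norm_num : (0 : ℝ) ≤ 1) hcont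
        have h0 : (1 - κ) * (0 : ℝ) / (1 - κ * (0 : ℝ) ^ 2) = 0 := by ring
        have h1v : (1 - κ) * (1 : ℝ) / (1 - κ * (1 : ℝ) ^ 2) = 1 := by
          rw [show (1 : ℝ) - κ * (1 : ℝ) ^ 2 = 1 - κ by ring]
          field_simp
        simp only [h0, h1v] at hIVT
        obtain ⟨r, hr, hrs⟩ := hIVT ⟨hs0.le, hw.le⟩
        exact ⟨r, hr, hrs⟩
      have hr1 : r < 1 := by
        rcases lt_or_eq_of_le hrIcc.2 with h | h
        · exact h
        · rw [h] at hrρ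
          rw [show (1 - κ) * (1 : ℝ) / (1 - κ * (1 : ℝ) ^ 2) = 1 by
            rw [show (1 : ℝ) - κ * (1 : ℝ) ^ 2 = 1 - κ by ring]; field_simp] at hrρ
          linarith
      have hr0 : 0 ≤ r := hrIcc.1
      have hdr := hpos1 r hr0 hrIcc.2
      refine ⟨((r / ‖w‖ : ℝ) : ℂ) * w, ?_, ?_⟩
      · rw [Metric.mem_ball, dist_zero_right, norm_mul, Complex.norm_real, Real.norm_eq_abs,
          _root_.abs_of_nonneg (div_nonneg hr0 hs0.le)]
        rw [div_mul_cancel₀ _ (ne_of_gt hs0)]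
        exact hr1
      · have hnz : ‖((r / ‖w‖ : ℝ) : ℂ) * w‖ = r := by
          rw [norm_mul, Complex.norm_real, Real.norm_eq_abs,
            _root_.abs_of_nonneg (div_nonneg hr0 hs0.le), div_mul_cancel₀ _ (ne_of_gt hs0)]
        simp only [hnz]
        have hcoef : ((1 - κ) * (r / ‖w‖) : ℝ) = 1 - κ * r ^ 2 := by
          rw [div_eq_iff (ne_of_gt hdr)] at hrρ
          calc (1 - κ) * (r / ‖w‖) = ((1 - κ) * r) / ‖w‖ := by ring
            _ = (‖w‖ * (1 - κ * r ^ 2)) / ‖w‖ := by rw [hrρ]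
            _ = 1 - κ * r ^ 2 := mul_div_cancel_left₀ _ (ne_of_gt hs0)
        rw [div_eq_iff (Complex.ofReal_ne_zero.mpr (ne_of_gt hdr))]
        have hcoefC := congrArg (fun x : ℝ => (x : ℂ) * w) hcoef
        push_cast at hcoefC ⊢
        linear_combination hcoefC
  have hbij : Set.BijOn (fun z : ℂ => (((1 - κ : ℝ)) : ℂ) * z / (((1 - κ * ‖z‖ ^ 2 : ℝ)) : ℂ))
      (Metric.ball (0 : ℂ) 1) (Metric.ball (0 : ℂ) 1) := ⟨hmaps, hinj, hsurj⟩
  refine ⟨hbij, ?_⟩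
  have hball : MeasurableSet (Metric.ball (0 : ℂ) 1) := measurableSet_ball
  set A : ℂ → (ℂ →L[ℝ] ℂ) := fun z => Amap ((((1 - κ) / (1 - κ * ‖z‖ ^ 2) ^ 2 : ℝ)) : ℂ)
      (((((1 - κ) * κ / (1 - κ * ‖z‖ ^ 2) ^ 2 : ℝ)) : ℂ) * z ^ 2) with hA
  have hderiv : ∀ z ∈ Metric.ball (0 : ℂ) 1,
      HasFDerivWithinAt (fun z : ℂ => (((1 - κ : ℝ)) : ℂ) * z / (((1 - κ * ‖z‖ ^ 2 : ℝ)) : ℂ))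
        (A z) (Metric.ball (0 : ℂ) 1) z := by
    intro z hz
    rw [Metric.mem_ball, dist_zero_right] at hz
    exact (hasFDerivAt_phi κ (ne_of_gt (hpos1 ‖z‖ (norm_nonneg z) hz.le))).hasFDerivWithinAt
  have hcv := integral_image_eq_integral_abs_det_fderiv_smul volume hball hderiv hbij.injOn
    (fun w => F w * (starRingEnd ℂ) (G w))
  rw [hbij.image_eq] at hcv
  have hdet : ∀ z : ℂ, ‖z‖ < 1 →
      (A z).det = (1 - κ) ^ 2 * (1 + κ * ‖z‖ ^ 2) / (1 - κ * ‖z‖ ^ 2) ^ 3 := by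
    intro z hz
    have hd := hpos1 ‖z‖ (norm_nonneg z) hz.le
    rw [hA]
    simp only
    rw [det_Amap]
    have hnsq : Complex.normSq z = ‖z‖ ^ 2 := by
      rw [Complex.normSq_eq_norm_sq]
    rw [Complex.normSq_mul, Complex.normSq_ofReal, Complex.normSq_ofReal, map_pow,
      hnsq]
    linear_combination det_calc κ ‖z‖ (ne_of_gt hd)
  have hpt : ∀ z ∈ Metric.ball (0 : ℂ) 1,
      f z * (starRingEnd ℂ) (g z) *
          ((((1 + κ * ‖z‖ ^ 2) / (1 - κ * ‖z‖ ^ 2)) / (1 + κ * ‖z‖ ^ 2) ^ 2 : ℝ) : ℂ)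
        = (1 / (1 - κ ^ 2) : ℝ) • (|(A z).det| •
            (F ((((1 - κ : ℝ)) : ℂ) * z / (((1 - κ * ‖z‖ ^ 2 : ℝ)) : ℂ)) *
              (starRingEnd ℂ) (G ((((1 - κ : ℝ)) : ℂ) * z / (((1 - κ * ‖z‖ ^ 2 : ℝ)) : ℂ))))) := by
    intro z hz
    rw [Metric.mem_ball, dist_zero_right] at hz
    have hd1 := hpos1 ‖z‖ (norm_nonneg z) hz.le
    have hd2 := hpos2 ‖z‖ (norm_nonneg z) hz.le
    have habs : |(A z).det| = (1 - κ) ^ 2 * (1 + κ * ‖z‖ ^ 2) / (1 - κ * ‖z‖ ^ 2) ^ 3 := by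
      rw [hdet z hz]
      exact abs_of_pos (by positivity)
    rw [hf z, hg z, map_mul, map_mul, Complex.conj_ofReal, Complex.conj_ofReal,
      Complex.real_smul, Complex.real_smul, habs]
    have hc2 : Real.sqrt ((1 - κ) / (1 + κ)) * Real.sqrt ((1 - κ) / (1 + κ))
        = (1 - κ) / (1 + κ) := Real.mul_self_sqrt (by positivity)
    have hκsq : (1 : ℝ) - κ ^ 2 ≠ 0 := by nlinarith
    have hcoef : (Real.sqrt ((1 - κ) / (1 + κ)) * ((1 + κ * ‖z‖ ^ 2) / (1 - κ * ‖z‖ ^ 2))) *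
        (Real.sqrt ((1 - κ) / (1 + κ)) * ((1 + κ * ‖z‖ ^ 2) / (1 - κ * ‖z‖ ^ 2))) *
        (((1 + κ * ‖z‖ ^ 2) / (1 - κ * ‖z‖ ^ 2)) / (1 + κ * ‖z‖ ^ 2) ^ 2)
        = (1 / (1 - κ ^ 2)) * ((1 - κ) ^ 2 * (1 + κ * ‖z‖ ^ 2) / (1 - κ * ‖z‖ ^ 2) ^ 3) := by
      calc (Real.sqrt ((1 - κ) / (1 + κ)) * ((1 + κ * ‖z‖ ^ 2) / (1 - κ * ‖z‖ ^ 2))) *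
            (Real.sqrt ((1 - κ) / (1 + κ)) * ((1 + κ * ‖z‖ ^ 2) / (1 - κ * ‖z‖ ^ 2))) *
            (((1 + κ * ‖z‖ ^ 2) / (1 - κ * ‖z‖ ^ 2)) / (1 + κ * ‖z‖ ^ 2) ^ 2)
          = (Real.sqrt ((1 - κ) / (1 + κ)) * Real.sqrt ((1 - κ) / (1 + κ))) *
              (((1 + κ * ‖z‖ ^ 2) / (1 - κ * ‖z‖ ^ 2)) *
              ((1 + κ * ‖z‖ ^ 2) / (1 - κ * ‖z‖ ^ 2)) *
              (((1 + κ * ‖z‖ ^ 2) / (1 - κ * ‖z‖ ^ 2)) / (1 + κ * ‖z‖ ^ 2) ^ 2)) := by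
            ring
        _ = ((1 - κ) / (1 + κ)) * (((1 + κ * ‖z‖ ^ 2) / (1 - κ * ‖z‖ ^ 2)) *
              ((1 + κ * ‖z‖ ^ 2) / (1 - κ * ‖z‖ ^ 2)) *
              (((1 + κ * ‖z‖ ^ 2) / (1 - κ * ‖z‖ ^ 2)) / (1 + κ * ‖z‖ ^ 2) ^ 2)) := by
            rw [hc2]
        _ = (1 / (1 - κ ^ 2)) * ((1 - κ) ^ 2 * (1 + κ * ‖z‖ ^ 2) / (1 - κ * ‖z‖ ^ 2) ^ 3) :=
            coef_calc κ ‖z‖ hκ1' hκ2' hd1 hd2 hκsq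
    calc (Real.sqrt ((1 - κ) / (1 + κ)) : ℂ) *
          (((1 + κ * ‖z‖ ^ 2) / (1 - κ * ‖z‖ ^ 2) : ℝ) : ℂ) *
          F ((((1 - κ : ℝ)) : ℂ) * z / (((1 - κ * ‖z‖ ^ 2 : ℝ)) : ℂ)) *
          ((Real.sqrt ((1 - κ) / (1 + κ)) : ℂ) *
            (((1 + κ * ‖z‖ ^ 2) / (1 - κ * ‖z‖ ^ 2) : ℝ) : ℂ) *
            (starRingEnd ℂ) (G ((((1 - κ : ℝ)) : ℂ) * z / (((1 - κ * ‖z‖ ^ 2 : ℝ)) : ℂ)))) *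
          ((((1 + κ * ‖z‖ ^ 2) / (1 - κ * ‖z‖ ^ 2)) / (1 + κ * ‖z‖ ^ 2) ^ 2 : ℝ) : ℂ)
        = (((Real.sqrt ((1 - κ) / (1 + κ)) * ((1 + κ * ‖z‖ ^ 2) / (1 - κ * ‖z‖ ^ 2))) *
            (Real.sqrt ((1 - κ) / (1 + κ)) * ((1 + κ * ‖z‖ ^ 2) / (1 - κ * ‖z‖ ^ 2))) *
            (((1 + κ * ‖z‖ ^ 2) / (1 - κ * ‖z‖ ^ 2)) / (1 + κ * ‖z‖ ^ 2) ^ 2) : ℝ) : ℂ) *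
            (F ((((1 - κ : ℝ)) : ℂ) * z / (((1 - κ * ‖z‖ ^ 2 : ℝ)) : ℂ)) *
              (starRingEnd ℂ) (G ((((1 - κ : ℝ)) : ℂ) * z / (((1 - κ * ‖z‖ ^ 2 : ℝ)) : ℂ)))) := by
          push_cast
          ring
      _ = (((1 / (1 - κ ^ 2)) * ((1 - κ) ^ 2 * (1 + κ * ‖z‖ ^ 2) / (1 - κ * ‖z‖ ^ 2) ^ 3) : ℝ) : ℂ) *
            (F ((((1 - κ : ℝ)) : ℂ) * z / (((1 - κ * ‖z‖ ^ 2 : ℝ)) : ℂ)) *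
              (starRingEnd ℂ) (G ((((1 - κ : ℝ)) : ℂ) * z / (((1 - κ * ‖z‖ ^ 2 : ℝ)) : ℂ)))) := by
          rw [hcoef]
      _ = ((1 / (1 - κ ^ 2) : ℝ) : ℂ) *
            (((1 - κ) ^ 2 * (1 + κ * ‖z‖ ^ 2) / (1 - κ * ‖z‖ ^ 2) ^ 3 : ℝ) : ℂ) *
            (F ((((1 - κ : ℝ)) : ℂ) * z / (((1 - κ * ‖z‖ ^ 2 : ℝ)) : ℂ)) *
              (starRingEnd ℂ) (G ((((1 - κ : ℝ)) : ℂ) * z / (((1 - κ * ‖z‖ ^ 2 : ℝ)) : ℂ)))) := by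
          push_cast
          ring
      _ = _ := by ring
  calc ∫ z in Metric.ball (0 : ℂ) 1,
        f z * (starRingEnd ℂ) (g z) *
          ((((1 + κ * ‖z‖ ^ 2) / (1 - κ * ‖z‖ ^ 2)) / (1 + κ * ‖z‖ ^ 2) ^ 2 : ℝ) : ℂ)
      = ∫ z in Metric.ball (0 : ℂ) 1,
          (1 / (1 - κ ^ 2) : ℝ) • (|(A z).det| •
            (F ((((1 - κ : ℝ)) : ℂ) * z / (((1 - κ * ‖z‖ ^ 2 : ℝ)) : ℂ)) *
              (starRingEnd ℂ) (G ((((1 - κ : ℝ)) : ℂ) * z / (((1 - κ * ‖z‖ ^ 2 : ℝ)) : ℂ))))) :=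
        setIntegral_congr_fun hball hpt
    _ = (1 / (1 - κ ^ 2) : ℝ) • ∫ z in Metric.ball (0 : ℂ) 1, |(A z).det| •
            (F ((((1 - κ : ℝ)) : ℂ) * z / (((1 - κ * ‖z‖ ^ 2 : ℝ)) : ℂ)) *
              (starRingEnd ℂ) (G ((((1 - κ : ℝ)) : ℂ) * z / (((1 - κ * ‖z‖ ^ 2 : ℝ)) : ℂ)))) :=
        integral_smul _ _
    _ = (1 / (1 - κ ^ 2) : ℝ) • ∫ w in Metric.ball (0 : ℂ) 1, F w * (starRingEnd ℂ) (G w) := by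
        rw [hcv]
    _ = ((1 / (1 - κ ^ 2) : ℝ) : ℂ) * ∫ w in Metric.ball (0 : ℂ) 1, F w * (starRingEnd ℂ) (G w) :=
        Complex.real_smul
end

section
/- Let κ ∈ (-1,1) and ρ ∈ [0,1]. For θ ∈ ℝ define θ'(θ) = θ - arctan( κρ²·sin(2θ) / (1 + κρ²·cos(2θ)) ). Then θ' is differentiable in θ with dθ'/dθ = (1 - κ²ρ⁴) / ((1+κρ²)² - 4κρ²·sin²θ); in particular the denominator (1+κρ²)² - 4κρ²sin²θ = 1 + κ²ρ⁴ + 2κρ²cos(2θ) is positive. Moreover sin²(θ'(θ)) = (1-κρ²)²·sin²θ / ((1+κρ²)² - 4κρ²·sin²θ), and sin(θ'(θ)) has the same sign as sin(θ). -/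
open Real

private lemma sign_pos_mul (c x : ℝ) (hc : 0 < c) : Real.sign (c * x) = Real.sign x := by
  rcases lt_trichotomy x 0 with h | h | h
  · rw [Real.sign_of_neg (mul_neg_of_pos_of_neg hc h), Real.sign_of_neg h]
  · rw [h, mul_zero]
  · rw [Real.sign_of_pos (mul_pos hc h), Real.sign_of_pos h]

private lemma fiber_aux (a : ℝ) (ha1 : -1 < a) (ha2 : a < 1) (θ : ℝ) :
    0 < (1 + a) ^ 2 - 4 * a * Real.sin θ ^ 2 ∧
    HasDerivAt
      (fun x : ℝ => x - Real.arctan (a * Real.sin (2 * x) / (1 + a * Real.cos (2 * x))))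
      ((1 - a ^ 2) / ((1 + a) ^ 2 - 4 * a * Real.sin θ ^ 2)) θ ∧
    Real.sin (θ - Real.arctan (a * Real.sin (2 * θ) / (1 + a * Real.cos (2 * θ)))) ^ 2 =
      (1 - a) ^ 2 * Real.sin θ ^ 2 / ((1 + a) ^ 2 - 4 * a * Real.sin θ ^ 2) ∧
    Real.sign
        (Real.sin (θ - Real.arctan (a * Real.sin (2 * θ) / (1 + a * Real.cos (2 * θ))))) =
      Real.sign (Real.sin θ) := by
  have hDD : (1 + a) ^ 2 - 4 * a * Real.sin θ ^ 2
      = 1 + a ^ 2 + 2 * a * Real.cos (2 * θ) := by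
    rw [Real.cos_two_mul]
    linear_combination (-4 * a) * Real.sin_sq_add_cos_sq θ
  have h1 := Real.neg_one_le_cos (2 * θ)
  have h2 := Real.cos_le_one (2 * θ)
  have hD : 0 < 1 + a ^ 2 + 2 * a * Real.cos (2 * θ) := by
    rcases le_or_gt 0 a with h | h
    · nlinarith [sq_nonneg (1 - a),
        mul_nonneg h (by linarith : (0:ℝ) ≤ 1 + Real.cos (2 * θ))]
    · nlinarith [sq_nonneg (1 + a),
        mul_nonneg (by linarith : (0:ℝ) ≤ -a) (by linarith : (0:ℝ) ≤ 1 - Real.cos (2 * θ))]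
  have hv : 0 < 1 + a * Real.cos (2 * θ) := by
    rcases le_or_gt 0 a with h | h
    · nlinarith
    · nlinarith
  have hvne : (1 + a * Real.cos (2 * θ)) ≠ 0 := ne_of_gt hv
  have hDne : (1 + a ^ 2 + 2 * a * Real.cos (2 * θ)) ≠ 0 := ne_of_gt hD
  have hs := Real.sin_sq_add_cos_sq (2 * θ)
  have h1t : 1 + (a * Real.sin (2 * θ) / (1 + a * Real.cos (2 * θ))) ^ 2
      = (1 + a ^ 2 + 2 * a * Real.cos (2 * θ)) / (1 + a * Real.cos (2 * θ)) ^ 2 := by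
    field_simp
    linear_combination (a ^ 2) * hs
  -- the sine formula
  have hsin : Real.sin (θ - Real.arctan (a * Real.sin (2 * θ) / (1 + a * Real.cos (2 * θ))))
      = (1 - a) * Real.sin θ / Real.sqrt (1 + a ^ 2 + 2 * a * Real.cos (2 * θ)) := by
    have hsqrt : Real.sqrt (1 + (a * Real.sin (2 * θ) / (1 + a * Real.cos (2 * θ))) ^ 2)
        = Real.sqrt (1 + a ^ 2 + 2 * a * Real.cos (2 * θ)) / (1 + a * Real.cos (2 * θ)) := by
      rw [h1t, Real.sqrt_div hD.le, Real.sqrt_sq hv.le]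
    have hkey : Real.sin (2 * θ) * Real.cos θ - Real.cos (2 * θ) * Real.sin θ = Real.sin θ := by
      have h := Real.sin_sub (2 * θ) θ
      rw [show 2 * θ - θ = θ by ring] at h
      linarith
    have hsD : (0:ℝ) < Real.sqrt (1 + a ^ 2 + 2 * a * Real.cos (2 * θ)) := Real.sqrt_pos.mpr hD
    rw [Real.sin_sub, Real.sin_arctan, Real.cos_arctan, hsqrt]
    generalize Real.sqrt (1 + a ^ 2 + 2 * a * Real.cos (2 * θ)) = S at hsD ⊢
    have hSne : S ≠ 0 := ne_of_gt hsD
    field_simp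
    linear_combination (-a) * hkey
  have hsD : (0:ℝ) < Real.sqrt (1 + a ^ 2 + 2 * a * Real.cos (2 * θ)) := Real.sqrt_pos.mpr hD
  rw [hDD]
  refine ⟨hD, ?_, ?_, ?_⟩
  · -- derivative
    have hlin : HasDerivAt (fun x : ℝ => 2 * x) 2 θ := by
      simpa using (hasDerivAt_id θ).const_mul (2:ℝ)
    have hu : HasDerivAt (fun x : ℝ => a * Real.sin (2 * x))
        (a * (Real.cos (2 * θ) * 2)) θ :=
      ((Real.hasDerivAt_sin (2 * θ)).comp θ hlin).const_mul a
    have hw : HasDerivAt (fun x : ℝ => 1 + a * Real.cos (2 * x))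
        (a * (-Real.sin (2 * θ) * 2)) θ := by
      simpa using (((Real.hasDerivAt_cos (2 * θ)).comp θ hlin).const_mul a).const_add 1
    have hq := hu.div hw hvne
    have harc := (Real.hasDerivAt_arctan
        (a * Real.sin (2 * θ) / (1 + a * Real.cos (2 * θ)))).comp θ hq
    have hfull := (hasDerivAt_id θ).sub harc
    refine hfull.congr_deriv ?_
    have hM : a * (Real.cos (2 * θ) * 2) * (1 + a * Real.cos (2 * θ))
        - a * Real.sin (2 * θ) * (a * (-Real.sin (2 * θ) * 2))
        = 2 * a * Real.cos (2 * θ) + 2 * a ^ 2 := by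
      linear_combination (2 * a ^ 2) * hs
    rw [hM, h1t, one_div_div]
    have h2' : (1 + a * Real.cos (2 * θ)) ^ 2 / (1 + a ^ 2 + 2 * a * Real.cos (2 * θ))
        * ((2 * a * Real.cos (2 * θ) + 2 * a ^ 2) / (1 + a * Real.cos (2 * θ)) ^ 2)
        = (2 * a * Real.cos (2 * θ) + 2 * a ^ 2) / (1 + a ^ 2 + 2 * a * Real.cos (2 * θ)) := by
      field_simp
    rw [h2']
    field_simp
    ring
  · -- squared sine
    rw [hsin, div_pow, mul_pow, Real.sq_sqrt hD.le]
  · -- sign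
    rw [hsin, show (1 - a) * Real.sin θ / Real.sqrt (1 + a ^ 2 + 2 * a * Real.cos (2 * θ))
        = ((1 - a) / Real.sqrt (1 + a ^ 2 + 2 * a * Real.cos (2 * θ))) * Real.sin θ by ring]
    exact sign_pos_mul _ _ (div_pos (by linarith) hsD)

/-- For `κ ∈ (-1,1)`, `ρ ∈ [0,1]` and the fiber change of variable
`θ'(θ) = θ - arctan(κρ² sin(2θ)/(1 + κρ² cos(2θ)))`, one has for every `θ`:
the denominator `(1+κρ²)² - 4κρ² sin²θ` is positive, `θ'` is differentiable at `θ` with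
derivative `(1 - κ²ρ⁴)/((1+κρ²)² - 4κρ² sin²θ)`,
`sin²(θ'(θ)) = (1-κρ²)² sin²θ/((1+κρ²)² - 4κρ² sin²θ)`, and `sin(θ'(θ))` has the same
sign as `sin θ`. -/
theorem fiber_change_of_variable (κ : ℝ) (hκ : κ ∈ Set.Ioo (-1 : ℝ) 1)
    (ρ : ℝ) (hρ : ρ ∈ Set.Icc (0 : ℝ) 1) (θ : ℝ) :
    0 < (1 + κ * ρ ^ 2) ^ 2 - 4 * κ * ρ ^ 2 * Real.sin θ ^ 2 ∧
    HasDerivAt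
      (fun x : ℝ => x - Real.arctan (κ * ρ ^ 2 * Real.sin (2 * x) / (1 + κ * ρ ^ 2 * Real.cos (2 * x))))
      ((1 - κ ^ 2 * ρ ^ 4) / ((1 + κ * ρ ^ 2) ^ 2 - 4 * κ * ρ ^ 2 * Real.sin θ ^ 2)) θ ∧
    Real.sin (θ - Real.arctan (κ * ρ ^ 2 * Real.sin (2 * θ) / (1 + κ * ρ ^ 2 * Real.cos (2 * θ)))) ^ 2 =
      (1 - κ * ρ ^ 2) ^ 2 * Real.sin θ ^ 2 /
        ((1 + κ * ρ ^ 2) ^ 2 - 4 * κ * ρ ^ 2 * Real.sin θ ^ 2) ∧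
    Real.sign
        (Real.sin (θ - Real.arctan (κ * ρ ^ 2 * Real.sin (2 * θ) / (1 + κ * ρ ^ 2 * Real.cos (2 * θ))))) =
      Real.sign (Real.sin θ) := by
  obtain ⟨hκ1, hκ2⟩ := hκ
  obtain ⟨hρ1, hρ2⟩ := hρ
  have hρsq : ρ ^ 2 ≤ 1 := by nlinarith
  have ha1 : -1 < κ * ρ ^ 2 := by nlinarith [sq_nonneg ρ]
  have ha2 : κ * ρ ^ 2 < 1 := by nlinarith [sq_nonneg ρ]
  have h := fiber_aux (κ * ρ ^ 2) ha1 ha2 θ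
  rw [show κ ^ 2 * ρ ^ 4 = (κ * ρ ^ 2) ^ 2 by ring]
  rw [show 4 * κ * ρ ^ 2 = 4 * (κ * ρ ^ 2) by ring]
  exact h
end
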